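/- arXiv:1006.1231 — 6 statements merged into one kernel-verified Lean document; each statement's English description precedes it below -/
import Mathlib

section
/- Let H = (V,E) be a k-graph with |E| ≤ |V| that has Property D_δ for some δ > 0, and let h be an orientation of E. Then for every α > 0 there exists C = C(α,δ) > 0 (one may take C = ⌈log_{1−δ} α⌉) and a set S ⊆ V with |S| ≥ (1−α)|V| such that every v ∈ S satisfies d_h(v, F_h) ≤ C. -/
open Filter Real

attribute [local instance] Classical.propDecidable

/-- `nset edges h v t` is the set of vertices within `h`-distance at most `t` from `v`:
the union of the `0`th through `t`-th `h`-neighborhoods of `v`. -/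
noncomputable def nset {V ι : Type} [Fintype V] [DecidableEq V] [Fintype ι]
    (edges : ι → Multiset V) (h : ι → V) (v : V) : ℕ → Finset V
  | 0 => {v}
  | t + 1 =>
    nset edges h v t ∪
      Finset.univ.filter (fun w : V => ∃ i : ι, h i ∈ nset edges h v t ∧ w ∈ edges i)

lemma nset_mono {V ι : Type} [Fintype V] [DecidableEq V] [Fintype ι]
    (edges : ι → Multiset V) (h : ι → V) (v : V) (t : ℕ) :
    nset edges h v t ⊆ nset edges h v (t + 1) := by
  intro x hx
  simp [nset]
  exact Or.inl hx

lemma self_mem_nset {V ι : Type} [Fintype V] [DecidableEq V] [Fintype ι]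
    (edges : ι → Multiset V) (h : ι → V) (v : V) (t : ℕ) :
    v ∈ nset edges h v t := by
  induction t with
  | zero => simp [nset]
  | succ t ih => exact nset_mono edges h v t ih

lemma mem_nset_succ {V ι : Type} [Fintype V] [DecidableEq V] [Fintype ι]
    (edges : ι → Multiset V) (h : ι → V) (v x : V) (t : ℕ) :
    x ∈ nset edges h v (t + 1) ↔
      x ∈ nset edges h v t ∨ ∃ i, h i ∈ nset edges h v t ∧ x ∈ edges i := by
  rw [nset]
  simp only [Finset.mem_union, Finset.mem_filter, Finset.mem_univ, true_and]

lemma nset_shift {V ι : Type} [Fintype V] [DecidableEq V] [Fintype ι]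
    (edges : ι → Multiset V) (h : ι → V) (v w : V) (i : ι)
    (hi : h i = v) (hw : w ∈ edges i) (t : ℕ) :
    nset edges h w t ⊆ nset edges h v (t + 1) := by
  induction t with
  | zero =>
    intro x hx
    have hx' : x = w := by simpa [nset] using hx
    subst hx'
    rw [mem_nset_succ]
    exact Or.inr ⟨i, by simp [nset, hi], hw⟩
  | succ t ih =>
    intro x hx
    rw [mem_nset_succ] at hx
    rw [mem_nset_succ]
    rcases hx with hx | ⟨j, hj, hx⟩
    · exact Or.inl (ih hx)
    · exact Or.inr ⟨j, ih hj, hx⟩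

/-- if a `k`-graph `H = (V,E)` with `|E| ≤ |V|` has Property `D_δ` and `h` is
an orientation of `E`, then for every `α > 0` there is `C > 0` and a set `S ⊆ V` with
`|S| ≥ (1-α)|V|` such that every `v ∈ S` has a free vertex within `h`-distance `C`. -/
theorem statement_3 (k : ℕ) (hk : 3 ≤ k) (V ι : Type) [Fintype V] [DecidableEq V] [Fintype ι]
    (edges : ι → Multiset V) (hsize : ∀ i, (edges i).card ≤ k)
    (hEV : Fintype.card ι ≤ Fintype.card V)
    (δ : ℝ) (hδ : 0 < δ)
    (hD : ∀ V' : Finset V, V'.Nonempty →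
      ((Finset.univ.filter (fun i : ι => ∀ v ∈ edges i, v ∈ V')).card : ℝ)
        < (1 - δ) * V'.card)
    (h : ι → V) (hinj : Function.Injective h) (hmem : ∀ i, h i ∈ edges i)
    (α : ℝ) (hα : 0 < α) :
    ∃ C : ℕ, 0 < C ∧
      ∃ S : Finset V, (1 - α) * Fintype.card V ≤ (S.card : ℝ) ∧
        ∀ v ∈ S, ∃ w ∈ nset edges h v C, ∀ i : ι, h i ≠ w := by
  classical
  -- Dispose of the case where V is empty.
  by_cases hVe : IsEmpty V
  · refine ⟨1, one_pos, ∅, ?_, ?_⟩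
    · simp [Fintype.card_eq_zero]
    · intro v hv; exact absurd hv (by simp)
  have hne' : Nonempty V := not_isEmpty_iff.mp hVe
  obtain ⟨v0⟩ := hne'
  have h1δ : 0 < 1 - δ := by
    by_contra hle
    push_neg at hle
    have hd := hD {v0} ⟨v0, by simp⟩
    have hge : (0:ℝ) ≤ ((Finset.univ.filter (fun i : ι => ∀ v ∈ edges i, v ∈ ({v0} : Finset V))).card : ℝ) := by positivity
    have : (1 - δ) * (({v0} : Finset V).card : ℝ) ≤ 0 := by
      simp only [Finset.card_singleton, Nat.cast_one, mul_one]
      exact hle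
    linarith
  have h1δ' : 1 - δ < 1 := by linarith
  -- the sets of "bad" vertices
  set B : ℕ → Finset V := fun t =>
    Finset.univ.filter (fun v => ∀ w ∈ nset edges h v t, ∃ i, h i = w) with hB
  have hBmono : ∀ t, B (t+1) ⊆ B t := by
    intro t v hv
    simp only [hB, Finset.mem_filter, Finset.mem_univ, true_and] at hv ⊢
    intro w hw
    exact hv w (nset_mono edges h v t hw)
  have hstep : ∀ t, ((B (t+1)).card : ℝ) ≤ (1 - δ) * (B t).card := by
    intro t
    rcases Finset.eq_empty_or_nonempty (B t) with he | hne
    · have hBe : B (t+1) = ∅ := Finset.subset_empty.mp (he ▸ hBmono t)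
      rw [hBe, he]
      simp
    · rcases Finset.eq_empty_or_nonempty (B (t+1)) with hBe | hBne
      · rw [hBe]
        simpa using mul_nonneg h1δ.le (Nat.cast_nonneg _)
      have hocc : ∀ v ∈ B (t+1), ∃ i, h i = v := by
        intro v hv
        simp only [hB, Finset.mem_filter, Finset.mem_univ, true_and] at hv
        exact hv v (self_mem_nset edges h v (t+1))
      set f : V → ι := fun v =>
        if hv : ∃ i, h i = v then Classical.choose hv else Classical.choice (let ⟨v, hv⟩ := hBne; ⟨(hocc v hv).choose⟩) with hf
      have hfmem : ∀ v ∈ B (t+1), h (f v) = v := by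
        intro v hv
        have hex := hocc v hv
        simp only [hf, dif_pos hex]
        exact Classical.choose_spec hex
      have hcard : (B (t+1)).card ≤
          (Finset.univ.filter (fun i : ι => ∀ v ∈ edges i, v ∈ B t)).card := by
        apply Finset.card_le_card_of_injOn f
        · intro v hv
          simp only [Finset.mem_coe, Finset.mem_filter, Finset.mem_univ, true_and]
          intro w hw
          simp only [hB, Finset.mem_filter, Finset.mem_univ, true_and]
          intro u hu
          have hsub := nset_shift edges h v w (f v) (hfmem v hv) hw t
          simp only [Finset.mem_coe, hB, Finset.mem_filter, Finset.mem_univ, true_and] at hv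
          exact hv u (hsub hu)
        · intro a ha b hb hab
          have hh := congrArg h hab
          rwa [hfmem a ha, hfmem b hb] at hh
      exact le_of_lt (lt_of_le_of_lt (Nat.cast_le.mpr hcard) (hD (B t) hne))
  have hbound : ∀ t, ((B t).card : ℝ) ≤ (1 - δ) ^ t * (Fintype.card V : ℝ) := by
    intro t
    induction t with
    | zero =>
      simp only [pow_zero, one_mul]
      exact_mod_cast Finset.card_le_univ (B 0)
    | succ t ih =>
      calc ((B (t+1)).card : ℝ) ≤ (1 - δ) * (B t).card := hstep t
        _ ≤ (1 - δ) * ((1 - δ) ^ t * (Fintype.card V : ℝ)) := by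
            exact mul_le_mul_of_nonneg_left ih h1δ.le
        _ = (1 - δ) ^ (t+1) * (Fintype.card V : ℝ) := by ring
  -- choose C
  obtain ⟨n, hn⟩ := exists_pow_lt_of_lt_one hα h1δ'
  set C := n + 1 with hC
  have hCα : (1 - δ) ^ C ≤ α := by
    calc (1 - δ) ^ C ≤ (1 - δ) ^ n :=
          pow_le_pow_of_le_one h1δ.le h1δ'.le (Nat.le_succ n)
      _ ≤ α := hn.le
  refine ⟨C, Nat.succ_pos n, (B C)ᶜ, ?_, ?_⟩
  · have hcompl : (((B C)ᶜ : Finset V).card : ℝ) = (Fintype.card V : ℝ) - (B C).card := by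
      rw [Finset.card_compl]
      have := Finset.card_le_univ (B C)
      push_cast [Nat.cast_sub this]
      ring_nf
    rw [hcompl]
    have h1 : ((B C).card : ℝ) ≤ (1 - δ) ^ C * (Fintype.card V : ℝ) := hbound C
    have h2 : (1 - δ) ^ C * (Fintype.card V : ℝ) ≤ α * (Fintype.card V : ℝ) :=
      mul_le_mul_of_nonneg_right hCα (Nat.cast_nonneg _)
    nlinarith [(by positivity : (0:ℝ) ≤ (Fintype.card V : ℝ))]
  · intro v hv
    simp only [Finset.mem_compl, hB, Finset.mem_filter, Finset.mem_univ, true_and] at hv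
    push_neg at hv
    obtain ⟨w, hw, hwfree⟩ := hv
    exact ⟨w, hw, fun i hi => hwfree i hi⟩
end

section
/- Let k ≥ 3 and let H = (V,E) be a k-graph in which every edge contains at least two vertices, such that (1) the core of H has Property D_δ for some 0 < δ < 1/4, and (2) H has Property 𝓔. Then there exists ζ ∈ (0,1), depending only on δ and k, such that H itself has Property D_{ζδ}. -/
open Filter Real

attribute [local instance] Classical.propDecidable
set_option maxHeartbeats 4000000

/-- Edge set of the core: the union of all edge subsets `F` in which every covered vertex
has degree (counted with multiplicity) at least `2`; this union is the maximum such set. -/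
noncomputable def coreEdges {V ι : Type} [Fintype V] [DecidableEq V] [Fintype ι]
    (edges : ι → Multiset V) : Finset ι :=
  Finset.univ.filter (fun i : ι =>
    ∃ F : Finset ι,
      (∀ v : V, (∃ j ∈ F, v ∈ edges j) → 2 ≤ ∑ j ∈ F, (edges j).count v) ∧ i ∈ F)

/-- Vertex set of the core. -/
noncomputable def coreVerts {V ι : Type} [Fintype V] [DecidableEq V] [Fintype ι]
    (edges : ι → Multiset V) : Finset V :=
  Finset.univ.filter (fun v : V => ∃ i ∈ coreEdges edges, v ∈ edges i)

/-- `x_s = log_k((k-1)e^k) / (log_k(n/s) - 1)`. -/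
noncomputable def xval (k n : ℕ) (s : ℝ) : ℝ :=
  Real.logb k (((k : ℝ) - 1) * Real.exp k) / (Real.logb k ((n : ℝ) / s) - 1)

/-- Property `𝓔` for a `k`-graph with vertex type `V` and edges indexed by `ι`. -/
def PropE {V ι : Type} [Fintype V] [DecidableEq V] [Fintype ι]
    (k : ℕ) (edges : ι → Multiset V) : Prop :=
  (∀ E' : Finset ι,
    Real.log (Real.log (Fintype.card V)) < (E'.card : ℝ) →
    (E'.card : ℝ) < (Fintype.card V : ℝ) / k →
      ((k : ℝ) - 1 - xval k (Fintype.card V) E'.card) * E'.card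
        ≤ (((E'.biUnion fun i => (edges i).toFinset).card : ℕ) : ℝ)) ∧
  (∀ E' : Finset ι, (E'.card : ℝ) ≤ Real.log (Real.log (Fintype.card V)) →
      ((k : ℝ) - 1) * E'.card
        ≤ (((E'.biUnion fun i => (edges i).toFinset).card : ℕ) : ℝ))

section Helpers

variable {V ι : Type} [Fintype V] [DecidableEq V] [Fintype ι] (edges : ι → Multiset V)

lemma mem_coreEdges' {i : ι} :
    i ∈ coreEdges edges ↔ ∃ F : Finset ι,
      (∀ v : V, (∃ j ∈ F, v ∈ edges j) → 2 ≤ ∑ j ∈ F, (edges j).count v) ∧ i ∈ F := by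
  simp [coreEdges]

lemma mem_coreVerts' {v : V} :
    v ∈ coreVerts edges ↔ ∃ i ∈ coreEdges edges, v ∈ edges i := by
  simp [coreVerts]

lemma vert_mem_coreVerts {i : ι} {v : V} (hi : i ∈ coreEdges edges) (hv : v ∈ edges i) :
    v ∈ coreVerts edges := (mem_coreVerts' edges).2 ⟨i, hi, hv⟩

lemma witness_subset_coreEdges {F : Finset ι}
    (hF : ∀ v : V, (∃ j ∈ F, v ∈ edges j) → 2 ≤ ∑ j ∈ F, (edges j).count v) :
    F ⊆ coreEdges edges := fun i hi => (mem_coreEdges' edges).2 ⟨F, hF, hi⟩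

lemma exists_peel {F : Finset ι} (hne : F.Nonempty)
    (hnc : ∀ i ∈ F, i ∉ coreEdges edges) :
    ∃ i ∈ F, ∃ v : V, v ∈ edges i ∧ v ∉ coreVerts edges ∧ (edges i).count v = 1 ∧
      ∀ j ∈ F, j ≠ i → v ∉ edges j := by
  by_cases hv : ∃ v : V, (∃ j ∈ F, v ∈ edges j) ∧ v ∉ coreVerts edges ∧
      ∑ j ∈ F, (edges j).count v ≤ 1
  · obtain ⟨v, ⟨j₀, hj₀, hvj₀⟩, hvc, hsum⟩ := hv
    have h1 : 1 ≤ (edges j₀).count v := Multiset.one_le_count_iff_mem.2 hvj₀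
    have hadd : (edges j₀).count v + ∑ j ∈ F.erase j₀, (edges j).count v
        = ∑ j ∈ F, (edges j).count v := Finset.add_sum_erase F (fun j => (edges j).count v) hj₀
    have herase : ∑ j ∈ F.erase j₀, (edges j).count v = 0 := by omega
    have hcount : (edges j₀).count v = 1 := by omega
    refine ⟨j₀, hj₀, v, hvj₀, hvc, hcount, ?_⟩
    intro j hj hji hvj
    have hjm : j ∈ F.erase j₀ := Finset.mem_erase.2 ⟨hji, hj⟩
    have : 1 ≤ ∑ j ∈ F.erase j₀, (edges j).count v :=
      le_trans (Multiset.one_le_count_iff_mem.2 hvj)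
        (Finset.single_le_sum (f := fun j => (edges j).count v) (fun _ _ => Nat.zero_le _) hjm)
    omega
  · push_neg at hv
    have hW : ∀ v : V, (∃ j ∈ F ∪ coreEdges edges, v ∈ edges j) →
        2 ≤ ∑ j ∈ F ∪ coreEdges edges, (edges j).count v := by
      rintro v ⟨j, hj, hvj⟩
      by_cases hvc : v ∈ coreVerts edges
      · obtain ⟨i₀, hi₀, hvi₀⟩ := (mem_coreVerts' edges).1 hvc
        obtain ⟨F₀, hF₀, hi₀F⟩ := (mem_coreEdges' edges).1 hi₀
        have h2 : 2 ≤ ∑ j ∈ F₀, (edges j).count v := hF₀ v ⟨i₀, hi₀F, hvi₀⟩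
        have hsub : F₀ ⊆ F ∪ coreEdges edges :=
          (witness_subset_coreEdges edges hF₀).trans Finset.subset_union_right
        exact h2.trans (Finset.sum_le_sum_of_subset hsub)
      · have hjF : j ∈ F := by
          rcases Finset.mem_union.1 hj with h | h
          · exact h
          · exact absurd (vert_mem_coreVerts edges h hvj) hvc
        have h2 : 1 < ∑ j ∈ F, (edges j).count v := hv v ⟨j, hjF, hvj⟩ hvc
        exact h2.trans_le (Finset.sum_le_sum_of_subset Finset.subset_union_left)
    obtain ⟨i, hi⟩ := hne
    exact absurd ((mem_coreEdges' edges).2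
      ⟨F ∪ coreEdges edges, hW, Finset.mem_union_left _ hi⟩) (hnc i hi)

lemma card_le_sdiff_core :
    ∀ (F : Finset ι) (U : Finset V), (∀ i ∈ F, i ∉ coreEdges edges) →
    (∀ i ∈ F, ∀ v ∈ edges i, v ∈ U) →
    F.card ≤ (U \ coreVerts edges).card := by
  intro F
  induction F using Finset.strongInduction with
  | _ F IH =>
    intro U hnc hin
    rcases F.eq_empty_or_nonempty with rfl | hne
    · simp
    · obtain ⟨i, hiF, v, hvi, hvc, hcount, hvnot⟩ := exists_peel edges hne hnc
      have hvU : v ∈ U := hin i hiF v hvi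
      have h1 : (F.erase i).card ≤ ((U.erase v) \ coreVerts edges).card := by
        refine IH (F.erase i) (Finset.erase_ssubset hiF) (U.erase v)
          (fun j hj => hnc j (Finset.mem_of_mem_erase hj)) ?_
        intro j hj w hw
        have hjF : j ∈ F := Finset.mem_of_mem_erase hj
        have hji : j ≠ i := (Finset.mem_erase.1 hj).1
        refine Finset.mem_erase.2 ⟨?_, hin j hjF w hw⟩
        rintro rfl
        exact hvnot j hjF hji hw
      rw [Finset.erase_sdiff_comm] at h1
      have hvUC : v ∈ U \ coreVerts edges := Finset.mem_sdiff.2 ⟨hvU, hvc⟩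
      have h2 := Finset.card_erase_add_one hvUC
      have h3 := Finset.card_erase_add_one hiF
      omega

lemma card_lt_of_noncore (h2 : ∀ i, 2 ≤ Multiset.card (edges i)) :
    ∀ (F : Finset ι) (U : Finset V), F.Nonempty → (∀ i ∈ F, i ∉ coreEdges edges) →
    (∀ i ∈ F, ∀ v ∈ edges i, v ∈ U) → (∀ v ∈ U, v ∉ coreVerts edges) →
    F.card + 1 ≤ U.card := by
  intro F
  induction F using Finset.strongInduction with
  | _ F IH =>
    intro U hne hnc hin hU
    obtain ⟨i, hiF, v, hvi, hvc, hcount, hvnot⟩ := exists_peel edges hne hnc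
    have hvU : v ∈ U := hin i hiF v hvi
    rcases (F.erase i).eq_empty_or_nonempty with hFe | hFne
    · -- F = {i}; find a second vertex of edges i
      have hF1 : F.card = 1 := by
        have := Finset.card_erase_add_one hiF
        rw [hFe] at this; simpa using this.symm
      have hu : ∃ u ∈ edges i, u ≠ v := by
        by_contra hcon
        push_neg at hcon
        have : (edges i).count v = Multiset.card (edges i) :=
          Multiset.count_eq_card.2 (fun x hx => ((hcon x hx)).symm)
        have := h2 i
        omega
      obtain ⟨u, hu, huv⟩ := hu
      have : 1 < U.card := Finset.one_lt_card.2 ⟨u, hin i hiF u hu, v, hvU, huv⟩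
      omega
    · have h1 : (F.erase i).card + 1 ≤ (U.erase v).card := by
        refine IH (F.erase i) (Finset.erase_ssubset hiF) (U.erase v) hFne
          (fun j hj => hnc j (Finset.mem_of_mem_erase hj)) ?_
          (fun w hw => hU w (Finset.mem_of_mem_erase hw))
        intro j hj w hw
        have hjF : j ∈ F := Finset.mem_of_mem_erase hj
        have hji : j ≠ i := (Finset.mem_erase.1 hj).1
        refine Finset.mem_erase.2 ⟨?_, hin j hjF w hw⟩
        rintro rfl
        exact hvnot j hjF hji hw
      have h3 := Finset.card_erase_add_one hiF
      have h4 := Finset.card_erase_add_one hvU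
      omega

lemma exists_suffix :
    ∀ (F : Finset ι) (s : ℕ), (∀ i ∈ F, i ∉ coreEdges edges) → s ≤ F.card →
    ∃ F', F' ⊆ F ∧ F'.card = s ∧
      (F'.biUnion fun i => (edges i).toFinset).card + (F.card - s)
        ≤ (F.biUnion fun i => (edges i).toFinset).card := by
  intro F
  induction F using Finset.strongInduction with
  | _ F IH =>
    intro s hnc hs
    rcases eq_or_lt_of_le hs with heq | hlt
    · exact ⟨F, subset_rfl, heq.symm, by simp [heq]⟩
    · have hne : F.Nonempty := Finset.card_pos.1 (by omega)
      obtain ⟨i, hiF, v, hvi, hvc, hcount, hvnot⟩ := exists_peel edges hne hnc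
      have h3 := Finset.card_erase_add_one hiF
      have hsle : s ≤ (F.erase i).card := by omega
      obtain ⟨F', hF'sub, hF'card, hineq⟩ := IH (F.erase i) (Finset.erase_ssubset hiF) s
        (fun j hj => hnc j (Finset.mem_of_mem_erase hj)) hsle
      refine ⟨F', hF'sub.trans (Finset.erase_subset i F), hF'card, ?_⟩
      have hvmem : v ∈ F.biUnion fun i => (edges i).toFinset :=
        Finset.mem_biUnion.2 ⟨i, hiF, Multiset.mem_toFinset.2 hvi⟩
      have hVsub : ((F.erase i).biUnion fun i => (edges i).toFinset)
          ⊆ (F.biUnion fun i => (edges i).toFinset).erase v := by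
        intro w hw
        obtain ⟨j, hj, hwj⟩ := Finset.mem_biUnion.1 hw
        have hjF : j ∈ F := Finset.mem_of_mem_erase hj
        have hji : j ≠ i := (Finset.mem_erase.1 hj).1
        refine Finset.mem_erase.2 ⟨?_, Finset.mem_biUnion.2 ⟨j, hjF, hwj⟩⟩
        rintro rfl
        exact hvnot j hjF hji (Multiset.mem_toFinset.1 hwj)
      have h5 := Finset.card_le_card hVsub
      have h6 := Finset.card_erase_add_one hvmem
      omega



lemma L_pos {k : ℕ} (hk : 3 ≤ k) : 0 < Real.logb k (((k : ℝ) - 1) * Real.exp k) := by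
  have hk1 : (1:ℝ) < k := by exact_mod_cast lt_of_lt_of_le (by norm_num : 1 < 3) hk
  refine Real.logb_pos hk1 ?_
  have h1 : (1:ℝ) ≤ Real.exp k := Real.one_le_exp (by positivity)
  have hk3 : (3:ℝ) ≤ k := by exact_mod_cast hk
  nlinarith

lemma xval_le_half {k n : ℕ} (hk : 3 ≤ k) {s : ℝ} (hs : 1 ≤ s)
    (hsn : s * (k:ℝ) ^ ((1:ℝ) + 2 * Real.logb k (((k : ℝ) - 1) * Real.exp k)) ≤ (n:ℝ)) :
    xval k n s ≤ 1/2 := by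
  set L := Real.logb k (((k : ℝ) - 1) * Real.exp k) with hL
  have hLpos : 0 < L := L_pos hk
  have hk1 : (1:ℝ) < k := by exact_mod_cast lt_of_lt_of_le (by norm_num : 1 < 3) hk
  have hs0 : 0 < s := by linarith
  have hKpos : (0:ℝ) < (k:ℝ) ^ ((1:ℝ) + 2*L) := Real.rpow_pos_of_pos (by linarith) _
  have h1 : (k:ℝ) ^ ((1:ℝ) + 2*L) ≤ (n:ℝ)/s := (le_div_iff₀ hs0).2 (by linarith)
  have h2 : 1 + 2*L ≤ Real.logb k ((n:ℝ)/s) := by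
    have := Real.logb_le_logb_of_le hk1 hKpos h1
    rwa [Real.logb_rpow (by linarith) (by linarith)] at this
  have hd : 0 < Real.logb k ((n:ℝ)/s) - 1 := by linarith
  have h3 : xval k n s ≤ L / (2*L) := by
    unfold xval
    rw [← hL]
    exact div_le_div_of_nonneg_left hLpos.le (by linarith) (by linarith)
  have h4 : L / (2*L) = 1/2 := by
    field_simp
  linarith

lemma loglog_bound {n : ℕ} {K : ℝ} (hK : 3 ≤ K) (hn : 9*K^2 + 4 ≤ (n:ℝ)) :
    Real.log (Real.log n) + 2 ≤ (n:ℝ)/K ∧ 1 ≤ Real.log n := by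
  have hKpos : 0 < K := by linarith
  have hn3 : (3:ℝ) ≤ n := by nlinarith
  have hnpos : (0:ℝ) < n := by linarith
  have hlog1 : 1 ≤ Real.log n := by
    rw [Real.le_log_iff_exp_le hnpos]
    calc Real.exp 1 ≤ 2.7182818286 := Real.exp_one_lt_d9.le
    _ ≤ n := by norm_num; linarith
  refine ⟨?_, hlog1⟩
  have h1 : Real.log (Real.log n) ≤ Real.log n - 1 :=
    Real.log_le_sub_one_of_pos (by linarith)
  have hsq : Real.sqrt n * Real.sqrt n = n := Real.mul_self_sqrt hnpos.le
  have hsqnn : 0 ≤ Real.sqrt n := Real.sqrt_nonneg _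
  have h2 : Real.log (Real.sqrt n) ≤ Real.sqrt n - 1 := by
    refine Real.log_le_sub_one_of_pos ?_
    nlinarith
  have h3 : Real.log n = 2 * Real.log (Real.sqrt n) := by
    rw [Real.log_sqrt hnpos.le]; ring
  have h4 : 3*K ≤ Real.sqrt n := by
    have : Real.sqrt (9*K^2) ≤ Real.sqrt n := Real.sqrt_le_sqrt (by linarith)
    rwa [show 9*K^2 = (3*K)^2 by ring, Real.sqrt_sq (by linarith)] at this
  have h5 : 3 * Real.sqrt n ≤ (n:ℝ)/K := by
    rw [le_div_iff₀ hKpos]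
    nlinarith
  nlinarith




section Arith

lemma arith0 {z d : ℝ} (h1 : 0 < z) (h2 : z < 1) (h3 : 0 < d) (h4 : d < 1) : z*d < 1 := by
  nlinarith

lemma arith1 {z d P : ℝ} (hzP : z*P < 1) (h0 : 0 < d) (h1 : d ≤ 1) : z*d*P < 1 := by
  nlinarith [mul_lt_mul_of_pos_left hzP h0]

lemma arith2 {z d P : ℝ} (h : z*d < 1) (hP : 1 ≤ P) : 0 < (1-z*d)*P := by nlinarith

lemma arith3 {M m2 P z d : ℝ} (hM : M ≤ m2) (hs : m2 + 1 ≤ P) (hzp : z*d*P < 1) :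
    M < (1-z*d)*P := by nlinarith

lemma arith4 {M m1 m2 a b P z d : ℝ} (hM : M ≤ m1 + m2) (h1 : m1 < (1-d)*a) (h2 : m2 ≤ b)
    (hab : a + b = P) (ha : 1 ≤ a) (hzP : z*P < 1) (hd0 : 0 < d) : M < (1-z*d)*P := by
  nlinarith [mul_le_mul_of_nonneg_left ha hd0.le, mul_lt_mul_of_pos_left hzP hd0]

lemma arith5 {kx m2 VF P g : ℝ} (h : (kx-1)*m2 ≤ VF) (h2 : VF ≤ P) (hcon : (1-g)*P < m2)
    (hk : 3 ≤ kx) (hg : g ≤ 1/24) (hP : 1 ≤ P) (hm0 : 0 ≤ m2) : False := by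
  nlinarith [mul_le_mul_of_nonneg_right (by linarith : (2:ℝ) ≤ kx - 1) hm0,
    mul_le_mul_of_nonneg_right hg (by linarith : (0:ℝ) ≤ P)]

lemma arith6 {kx x m2 VF P g : ℝ} (h : (kx-1-x)*m2 ≤ VF) (hVP : VF ≤ P) (hx : x ≤ 1/2)
    (hcon : (1-g)*P < m2) (hk : 3 ≤ kx) (hg : g ≤ 1/24) (hP : 1 ≤ P) (hm : 0 ≤ m2) :
    False := by
  nlinarith [mul_le_mul_of_nonneg_right (by linarith : (3:ℝ)/2 ≤ kx-1-x) hm,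
    mul_le_mul_of_nonneg_right hg (by linarith : (0:ℝ) ≤ P)]

lemma arith7 {s m2 VF2 VFp P g nn Kv : ℝ} (h32 : (3/2)*s ≤ VFp)
    (hFV : VFp + (m2 - s) ≤ VF2) (hV : VF2 ≤ P) (hcon : (1-g)*P < m2)
    (hgP : g*P ≤ g*nn) (hgn : g*nn = (nn/Kv)/8) (hsgt : nn/Kv - 1 < s)
    (h27 : 27 ≤ nn/Kv) : False := by nlinarith

lemma arith8 {z g d : ℝ} (h1 : z ≤ g) (h2 : 0 ≤ z) (h3 : 0 < d) (h4 : d < 1) (h5 : 0 < g) :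
    z*d < g := by nlinarith

lemma arith9 {M m2 P z d g : ℝ} (hM : M ≤ m2) (key : m2 ≤ (1-g)*P) (h : z*d < g)
    (hP : 1 ≤ P) : M < (1-z*d)*P := by
  nlinarith [mul_lt_mul_of_pos_right h (by linarith : (0:ℝ) < P)]

lemma arith10 {M m1 m2 a b P z d g : ℝ} (hM : M ≤ m1+m2) (h1 : m1 < (1-d)*a) (h2 : m2 ≤ b)
    (hkey : m2 ≤ (1-g)*P) (hab : a+b = P) (hd0 : 0 < d) (hd1 : d ≤ 1) (hzg : z ≤ g)
    (hP : 0 ≤ P) : M < (1-z*d)*P := by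
  have e1 : (1-d)*m2 ≤ (1-d)*b := mul_le_mul_of_nonneg_left h2 (by linarith)
  have e2 : d*m2 ≤ d*((1-g)*P) := mul_le_mul_of_nonneg_left hkey hd0.le
  have e3 : 0 ≤ (g-z)*d*P := mul_nonneg (mul_nonneg (by linarith) hd0.le) hP
  have e4 : (1-d)*a + (1-d)*b = (1-d)*P := by rw [← hab]; ring
  nlinarith [e1, e2, e3, e4, h1, hM]

lemma arith12 {kx x s VF : ℝ} (h : (kx-1-x)*s ≤ VF) (hx : x ≤ 1/2) (hk : 3 ≤ kx)
    (hs : 0 ≤ s) : (3/2)*s ≤ VF := by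
  nlinarith [mul_le_mul_of_nonneg_right (by linarith : (3:ℝ)/2 ≤ kx-1-x) hs]

lemma arith11 {Kv nn : ℝ} (h3 : 3 ≤ Kv) (h : 9*Kv^2 + 4 ≤ nn) : 27 ≤ nn/Kv := by
  rw [le_div_iff₀ (by linarith)]
  nlinarith

end Arith

/-- let `k ≥ 3` and `0 < δ < 1/4`. There is `ζ ∈ (0,1)`, depending only on
`δ` and `k`, such that every `k`-graph whose edges all contain at least two vertices,
whose core has Property `D_δ`, and which has Property `𝓔`, itself has Property `D_{ζδ}`. -/
theorem statement_5 (k : ℕ) (hk : 3 ≤ k) (δ : ℝ) (hδ0 : 0 < δ) (hδ : δ < 1 / 4) :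
    ∃ ζ : ℝ, 0 < ζ ∧ ζ < 1 ∧
      ∀ (V ι : Type) [Fintype V] [DecidableEq V] [Fintype ι]
        (edges : ι → Multiset V),
        (∀ i, (edges i).card ≤ k) →
        (∀ i, 2 ≤ (edges i).card) →
        (∀ V' : Finset V, V' ⊆ coreVerts edges → V'.Nonempty →
          (((coreEdges edges).filter (fun i : ι => ∀ v ∈ edges i, v ∈ V')).card : ℝ)
            < (1 - δ) * V'.card) →
        PropE k edges →
        (∀ V' : Finset V, V'.Nonempty →
          ((Finset.univ.filter (fun i : ι => ∀ v ∈ edges i, v ∈ V')).card : ℝ)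
            < (1 - ζ * δ) * V'.card) := by
  have hkR : (3:ℝ) ≤ (k:ℝ) := by exact_mod_cast hk
  have hk1 : (1:ℝ) < (k:ℝ) := by linarith
  obtain ⟨L, hLdef⟩ : ∃ x, x = Real.logb k (((k : ℝ) - 1) * Real.exp k) := ⟨_, rfl⟩
  have hL : 0 < L := hLdef ▸ L_pos hk
  obtain ⟨K, hKdef⟩ : ∃ x, x = (k:ℝ) ^ ((1:ℝ) + 2*L) := ⟨_, rfl⟩
  have hKpos : 0 < K := hKdef ▸ Real.rpow_pos_of_pos (by linarith) _
  have hKk : (k:ℝ) < K := by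
    calc (k:ℝ) = (k:ℝ) ^ (1:ℝ) := (Real.rpow_one _).symm
    _ < K := by
      rw [hKdef]
      exact (Real.rpow_lt_rpow_left_iff hk1).2 (by linarith)
  have hK3 : (3:ℝ) ≤ K := by linarith
  obtain ⟨γ, hγdef⟩ : ∃ x, x = 1/(8*K) := ⟨_, rfl⟩
  have hγpos : 0 < γ := by rw [hγdef]; positivity
  have hγ24 : γ ≤ 1/24 := by
    rw [hγdef, div_le_div_iff₀ (by linarith) (by norm_num)]
    linarith
  obtain ⟨N, hNdef⟩ : ∃ x, x = 9*K^2 + 4 := ⟨_, rfl⟩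
  have hNpos : 0 < N := by rw [hNdef]; positivity
  have hN1 : 1 < N := by rw [hNdef]; nlinarith
  obtain ⟨ζ, hζdef⟩ : ∃ x, x = min γ (1/N) := ⟨_, rfl⟩
  have hζγ : ζ ≤ γ := hζdef ▸ min_le_left _ _
  have hζN : ζ ≤ 1/N := hζdef ▸ min_le_right _ _
  have hζpos : 0 < ζ := hζdef ▸ lt_min hγpos (by positivity)
  have hζ1 : ζ < 1 := lt_of_le_of_lt hζγ (by linarith)
  refine ⟨ζ, hζpos, hζ1, ?_⟩
  intro V ι _ _ _ edges hkc h2 hcore hE V' hV'ne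
  obtain ⟨hE1, hE2⟩ := hE
  obtain ⟨n, hn⟩ : ∃ x, x = Fintype.card V := ⟨_, rfl⟩
  rw [← hn] at hE1 hE2
  have hδ1 : δ ≤ 1 := by linarith only [hδ]
  have hδ1' : δ < 1 := by linarith only [hδ]
  have hab : (V' ∩ coreVerts edges).card + (V' \ coreVerts edges).card = V'.card :=
    Finset.card_inter_add_card_sdiff V' (coreVerts edges)
  have hP1 : 1 ≤ V'.card := Finset.card_pos.2 hV'ne
  have hPn : V'.card ≤ n := hn ▸ Finset.card_le_univ V'
  have hP1' : (1:ℝ) ≤ (V'.card:ℝ) := by exact_mod_cast hP1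
  obtain ⟨E₂, hE₂def⟩ : ∃ x, x = Finset.univ.filter
    (fun i : ι => i ∉ coreEdges edges ∧ ∀ v ∈ edges i, v ∈ V') := ⟨_, rfl⟩
  obtain ⟨E₁, hE₁def⟩ : ∃ x, x = (coreEdges edges).filter
    (fun i : ι => ∀ v ∈ edges i, v ∈ V') := ⟨_, rfl⟩
  have hsplit : (Finset.univ.filter (fun i : ι => ∀ v ∈ edges i, v ∈ V')).card
      ≤ E₁.card + E₂.card := by
    refine le_trans (Finset.card_le_card ?_) (Finset.card_union_le _ _)
    rw [hE₁def, hE₂def]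
    intro i hi
    simp only [Finset.mem_filter, Finset.mem_univ, true_and] at hi
    by_cases hic : i ∈ coreEdges edges
    · exact Finset.mem_union_left _ (Finset.mem_filter.2 ⟨hic, hi⟩)
    · exact Finset.mem_union_right _ (Finset.mem_filter.2 ⟨Finset.mem_univ _, hic, hi⟩)
  have hE₂nc : ∀ i ∈ E₂, i ∉ coreEdges edges :=
    fun i hi => (Finset.mem_filter.1 (hE₂def ▸ hi)).2.1
  have hE₂in : ∀ i ∈ E₂, ∀ v ∈ edges i, v ∈ V' :=
    fun i hi => (Finset.mem_filter.1 (hE₂def ▸ hi)).2.2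
  have hm2b : E₂.card ≤ (V' \ coreVerts edges).card :=
    card_le_sdiff_core edges E₂ V' hE₂nc hE₂in
  have hm1 : (V' ∩ coreVerts edges).Nonempty →
      (E₁.card : ℝ) < (1 - δ) * (V' ∩ coreVerts edges).card := by
    intro hAne
    have hsub : E₁ ⊆ (coreEdges edges).filter
        (fun i => ∀ v ∈ edges i, v ∈ V' ∩ coreVerts edges) := by
      rw [hE₁def]
      intro i hi
      obtain ⟨hic, hin⟩ := Finset.mem_filter.1 hi
      exact Finset.mem_filter.2 ⟨hic, fun v hv =>
        Finset.mem_inter.2 ⟨hin v hv, vert_mem_coreVerts edges hic hv⟩⟩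
    have h := hcore (V' ∩ coreVerts edges) Finset.inter_subset_right hAne
    have hc : (E₁.card : ℝ) ≤ (((coreEdges edges).filter
        (fun i => ∀ v ∈ edges i, v ∈ V' ∩ coreVerts edges)).card : ℝ) := by
      exact_mod_cast Finset.card_le_card hsub
    linarith only [h, hc]
  have hm1z : V' ∩ coreVerts edges = ∅ → E₁.card = 0 := by
    intro hAe
    rw [Finset.card_eq_zero, hE₁def, Finset.eq_empty_iff_forall_notMem]
    intro i hi
    obtain ⟨hic, hin⟩ := Finset.mem_filter.1 hi
    have hcard := h2 i
    obtain ⟨v, hv⟩ := Multiset.card_pos_iff_exists_mem.1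
      (show 0 < Multiset.card (edges i) by omega)
    have hmem : v ∈ V' ∩ coreVerts edges :=
      Finset.mem_inter.2 ⟨hin v hv, vert_mem_coreVerts edges hic hv⟩
    exact Finset.eq_empty_iff_forall_notMem.1 hAe v hmem
  have hMc : ((Finset.univ.filter (fun i : ι => ∀ v ∈ edges i, v ∈ V')).card:ℝ)
      ≤ (E₁.card:ℝ) + (E₂.card:ℝ) := by exact_mod_cast hsplit
  have hm2b' : (E₂.card:ℝ) ≤ ((V' \ coreVerts edges).card:ℝ) := by exact_mod_cast hm2b
  have hab' : ((V' ∩ coreVerts edges).card:ℝ) + ((V' \ coreVerts edges).card:ℝ)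
      = (V'.card:ℝ) := by exact_mod_cast hab
  have hm2nn : (0:ℝ) ≤ (E₂.card:ℝ) := Nat.cast_nonneg _
  rcases lt_or_ge ((n:ℝ)) N with hsmall | hlarge
  · -- small case
    have hPN : (V'.card : ℝ) < N := lt_of_lt_of_le' hsmall (by exact_mod_cast hPn)
    have hζP : ζ * (V'.card:ℝ) < 1 := by
      have ha : ζ * (V'.card:ℝ) ≤ (1/N) * (V'.card:ℝ) :=
        mul_le_mul_of_nonneg_right hζN (by positivity)
      have hb : (1/N) * (V'.card:ℝ) < (1/N) * N :=
        mul_lt_mul_of_pos_left hPN (by positivity)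
      have hcc : (1/N) * N = 1 := by field_simp
      linarith only [ha, hb, hcc]
    have hζδP : ζ * δ * (V'.card:ℝ) < 1 := arith1 hζP hδ0 hδ1
    rcases Finset.eq_empty_or_nonempty (V' ∩ coreVerts edges) with hAe | hAne
    · have hm1' := hm1z hAe
      have hm1'' : (E₁.card:ℝ) = 0 := by exact_mod_cast hm1'
      rcases Nat.eq_zero_or_pos E₂.card with hm2z | hm2p
      · have hM0 : (Finset.univ.filter (fun i : ι => ∀ v ∈ edges i, v ∈ V')).card = 0 := by
          omega
        rw [hM0]
        have h0 : (0:ℝ) < (1 - ζ*δ) * (V'.card:ℝ) := arith2 (arith0 hζpos hζ1 hδ0 hδ1') hP1'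
        push_cast
        linarith only [h0]
      · have hE₂ne : E₂.Nonempty := Finset.card_pos.1 hm2p
        have hnoc : ∀ v ∈ V', v ∉ coreVerts edges := by
          intro v hv hvc
          exact Finset.eq_empty_iff_forall_notMem.1 hAe v (Finset.mem_inter.2 ⟨hv, hvc⟩)
        have hstrict : E₂.card + 1 ≤ V'.card :=
          card_lt_of_noncore edges h2 E₂ V' hE₂ne hE₂nc hE₂in hnoc
        have hstrict' : (E₂.card:ℝ) + 1 ≤ (V'.card:ℝ) := by exact_mod_cast hstrict
        exact arith3 (by linarith only [hMc, hm1'']) hstrict' hζδP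
    · have h1 := hm1 hAne
      have hA1 : (1:ℝ) ≤ ((V' ∩ coreVerts edges).card:ℝ) := by
        exact_mod_cast Finset.card_pos.2 hAne
      exact arith4 hMc h1 hm2b' hab' hA1 hζP hδ0
  · -- large case
    have hnN' : 9*K^2 + 4 ≤ (n:ℝ) := by rw [← hNdef]; exact hlarge
    obtain ⟨hllK, hlog1⟩ := loglog_bound hK3 hnN'
    have hloglog0 : 0 ≤ Real.log (Real.log n) := Real.log_nonneg hlog1
    have hnpos : (0:ℝ) < n := by
      have h9 : (0:ℝ) < 9*K^2 + 4 := by positivity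
      linarith only [h9, hnN']
    have hVE2 : (E₂.biUnion fun i => (edges i).toFinset).card ≤ V'.card := by
      apply Finset.card_le_card
      intro v hv
      obtain ⟨i, hi, hvi⟩ := Finset.mem_biUnion.1 hv
      exact hE₂in i hi v (Multiset.mem_toFinset.1 hvi)
    have hVE2' : ((E₂.biUnion fun i => (edges i).toFinset).card:ℝ) ≤ (V'.card:ℝ) := by
      exact_mod_cast hVE2
    have hnk27 : 27 ≤ (n:ℝ)/K := arith11 hK3 hnN'
    have key : (E₂.card : ℝ) ≤ (1-γ) * (V'.card:ℝ) := by
      by_contra hcon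
      push_neg at hcon
      rcases le_or_gt ((E₂.card:ℝ)) (Real.log (Real.log n)) with hc1 | hc1
      · exact arith5 (hE2 E₂ hc1) hVE2' hcon hkR hγ24 hP1' hm2nn
      · rcases le_or_gt ((E₂.card:ℝ)) ((n:ℝ)/K) with hc2 | hc2
        · have hm2pos : 0 < E₂.card := by
            have hq : (0:ℝ) < (E₂.card:ℝ) := lt_of_le_of_lt hloglog0 hc1
            exact_mod_cast hq
          have hm21 : (1:ℝ) ≤ (E₂.card:ℝ) := by exact_mod_cast hm2pos
          have hx : xval k n (E₂.card) ≤ 1/2 := by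
            apply xval_le_half hk hm21
            rw [← hLdef, ← hKdef]
            exact (le_div_iff₀ hKpos).1 hc2
          have hc2' : (E₂.card:ℝ) < (n:ℝ)/k := by
            refine lt_of_le_of_lt hc2 ?_
            exact div_lt_div_of_pos_left hnpos (by linarith only [hk1] : (0:ℝ) < (k:ℝ)) hKk
          exact arith6 (hE1 E₂ hc1 hc2') hVE2' hx hcon hkR hγ24 hP1' hm2nn
        · obtain ⟨s, hsdef⟩ : ∃ x, x = Nat.floor ((n:ℝ)/K) := ⟨_, rfl⟩
          have hsle : (s:ℝ) ≤ (n:ℝ)/K := hsdef ▸ Nat.floor_le (by positivity)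
          have hsgt : (n:ℝ)/K - 1 < (s:ℝ) := hsdef ▸ Nat.sub_one_lt_floor _
          have hsm2 : s ≤ E₂.card := by
            have hlt : (s:ℝ) < (E₂.card:ℝ) := lt_of_le_of_lt hsle hc2
            exact_mod_cast hlt.le
          obtain ⟨F', hF'sub, hF'card, hineq⟩ := exists_suffix edges E₂ s hE₂nc hsm2
          have hs_log : Real.log (Real.log n) < (s:ℝ) := by
            linarith only [hsgt, hllK, hloglog0]
          have hs1 : (1:ℝ) ≤ (s:ℝ) := by linarith only [hsgt, hnk27]
          have hs_nk : ((F'.card:ℕ):ℝ) < (n:ℝ)/k := by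
            rw [hF'card]
            exact lt_of_le_of_lt hsle
              (div_lt_div_of_pos_left hnpos (by linarith only [hk1] : (0:ℝ) < (k:ℝ)) hKk)
          have hprop := hE1 F' (by rw [hF'card]; exact hs_log) hs_nk
          rw [hF'card] at hprop
          have hx : xval k n (s:ℝ) ≤ 1/2 := by
            apply xval_le_half hk hs1
            rw [← hLdef, ← hKdef]
            exact (le_div_iff₀ hKpos).1 hsle
          have hsnn : (0:ℝ) ≤ (s:ℝ) := Nat.cast_nonneg _
          have h32 : (3/2)*(s:ℝ) ≤ ((F'.biUnion fun i => (edges i).toFinset).card:ℝ) :=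
            arith12 hprop hx hkR hsnn
          have hF'V : ((F'.biUnion fun i => (edges i).toFinset).card:ℝ)
              + ((E₂.card:ℝ) - (s:ℝ))
              ≤ ((E₂.biUnion fun i => (edges i).toFinset).card:ℝ) := by
            have h' : (((F'.biUnion fun i => (edges i).toFinset).card + (E₂.card - s) : ℕ):ℝ)
                ≤ ((E₂.biUnion fun i => (edges i).toFinset).card:ℝ) := by exact_mod_cast hineq
            rwa [Nat.cast_add, Nat.cast_sub hsm2] at h'
          have hγn : γ * (n:ℝ) = ((n:ℝ)/K)/8 := by
            rw [hγdef]
            ring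
          have hPn' : (V'.card:ℝ) ≤ (n:ℝ) := by exact_mod_cast hPn
          have hγP : γ * (V'.card:ℝ) ≤ γ * (n:ℝ) := mul_le_mul_of_nonneg_left hPn' hγpos.le
          exact arith7 h32 hF'V hVE2' hcon hγP hγn hsgt hnk27
    rcases Finset.eq_empty_or_nonempty (V' ∩ coreVerts edges) with hAe | hAne
    · have hm1' := hm1z hAe
      have hm1'' : (E₁.card:ℝ) = 0 := by exact_mod_cast hm1'
      exact arith9 (by linarith only [hMc, hm1'']) key
        (arith8 hζγ hζpos.le hδ0 hδ1' hγpos) hP1'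
    · have h1 := hm1 hAne
      exact arith10 hMc h1 hm2b' key hab' hδ0 hδ1 hζγ (by positivity)
end Helpers
end

section
/- Let k ≥ 3, let H = (V,E) be a k-graph on n vertices having Property 𝓔, let h be an orientation of its edges, let v ∈ V, and set s_i := N_{h,i}(v). Set t_ε := ⌊(1−ε)·log_{k−1} n⌋ and assume that all vertices within h-distance at most t_ε from v are occupied. Then there exists a constant d_k > 0 such that whenever ε > 0 is sufficiently small and n is sufficiently large, s_{t_ε} ≥ n^{1−ε}·e^{−d_k/ε}. -/
open Filter Real

attribute [local instance] Classical.propDecidable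

lemma exp_neg_two_le {y : ℝ} (hy0 : 0 ≤ y) (hyh : y ≤ 1/2) :
    Real.exp (-(2*y)) ≤ 1 - y := by
  have h2 : 1 + 2*y ≤ Real.exp (2*y) := by
    have := Real.add_one_le_exp (2*y); linarith
  have h3 : 1 ≤ (1 - y) * Real.exp (2*y) := by nlinarith
  have h5 : Real.exp (-(2*y)) * Real.exp (2*y) = 1 := by
    rw [← Real.exp_add]; ring_nf; exact Real.exp_zero
  nlinarith [Real.exp_pos (-(2*y)), Real.exp_pos (2*y)]

set_option maxHeartbeats 2000000 in
/-- for `k ≥ 3` there is `d_k > 0` such that for all sufficiently small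
`ε > 0` and sufficiently large `n`: in any `k`-graph on `n` vertices with Property `𝓔`,
with any orientation `h` and vertex `v`, if all vertices within `h`-distance
`t_ε = ⌊(1-ε)log_{k-1} n⌋` of `v` are occupied, then `s_{t_ε} ≥ n^{1-ε}·e^{-d_k/ε}`. -/
theorem statement_8 (k : ℕ) (hk : 3 ≤ k) :
    ∃ d : ℝ, 0 < d ∧ ∃ ε₀ : ℝ, 0 < ε₀ ∧ ∀ ε : ℝ, 0 < ε → ε < ε₀ →
      ∃ n₀ : ℕ, ∀ n : ℕ, n₀ ≤ n →
        ∀ (V ι : Type) [Fintype V] [DecidableEq V] [Fintype ι],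
          Fintype.card V = n →
          ∀ (edges : ι → Multiset V), (∀ i, (edges i).card ≤ k) → PropE k edges →
          ∀ (h : ι → V), Function.Injective h → (∀ i, h i ∈ edges i) →
          ∀ v : V,
            (∀ w ∈ nset edges h v ⌊(1 - ε) * Real.logb ((k : ℝ) - 1) n⌋₊,
              ∃ i : ι, h i = w) →
            (n : ℝ) ^ (1 - ε) * Real.exp (-d / ε)
              ≤ ((nset edges h v ⌊(1 - ε) * Real.logb ((k : ℝ) - 1) n⌋₊).card : ℝ) := by
  have hk3 : (3:ℝ) ≤ (k:ℝ) := by exact_mod_cast hk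
  have hk1 : (1:ℝ) < (k:ℝ) - 1 := by linarith
  have hk1' : (0:ℝ) < (k:ℝ) - 1 := by linarith
  have hlogk1 : (0:ℝ) < Real.log ((k:ℝ) - 1) := Real.log_pos hk1
  have hklt : (1:ℝ) < (k:ℝ) := by linarith
  have hlogk : (0:ℝ) < Real.log k := Real.log_pos hklt
  set L : ℝ := Real.logb k (((k:ℝ) - 1) * Real.exp k) with hLdef
  have hLpos : 0 < L := by
    rw [hLdef]
    apply Real.logb_pos hklt
    have h1 : (1:ℝ) ≤ Real.exp k := Real.one_le_exp (by positivity)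
    nlinarith
  clear_value L
  set B : ℝ := 4 * L * Real.log k / (((k:ℝ) - 1) * Real.log ((k:ℝ) - 1)) with hBdef
  have hBpos : 0 < B := by
    rw [hBdef]
    exact div_pos (by positivity) (by positivity)
  clear_value B
  refine ⟨2 * B + 1, by linarith, min (1 / Real.log k) (1/2), by positivity, ?_⟩
  intro ε hε hεlt
  have hεhalf : ε < 1/2 := lt_of_lt_of_le hεlt (min_le_right _ _)
  have hε1 : ε < 1 := by linarith
  have hεlogk : ε * Real.log k < 1 := by
    have h1 : ε < 1 / Real.log k := lt_of_lt_of_le hεlt (min_le_left _ _)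
    calc ε * Real.log k < (1 / Real.log k) * Real.log k :=
          mul_lt_mul_of_pos_right h1 hlogk
      _ = 1 := by field_simp
  set C : ℝ := 8 * (L + 1) * Real.log k with hCdef
  clear_value C
  refine ⟨⌈Real.exp (C / ε)⌉₊ + 2, ?_⟩
  intro n hn V ι _ _ _ hcardV edges hedges hPropE h hinj hmem v hocc
  have hn2 : 2 ≤ n := by omega
  have hn1 : (1:ℝ) ≤ (n:ℝ) := by exact_mod_cast Nat.one_le_of_lt hn2
  have hn0' : (0:ℝ) < (n:ℝ) := by linarith
  have hClog : C / ε ≤ Real.log n := by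
    rw [Real.le_log_iff_exp_le hn0']
    calc Real.exp (C/ε) ≤ (⌈Real.exp (C/ε)⌉₊ : ℝ) := Nat.le_ceil _
      _ ≤ (n:ℝ) := by
          have : ⌈Real.exp (C/ε)⌉₊ ≤ n := by omega
          exact_mod_cast this
  have hεn : 8 * (L + 1) * Real.log k ≤ ε * Real.log n := by
    have h1 : ε * (C/ε) ≤ ε * Real.log n := mul_le_mul_of_nonneg_left hClog hε.le
    have h2 : ε * (C/ε) = C := by field_simp
    rw [h2, hCdef] at h1; exact h1
  have hlogn : 0 < Real.log n := by nlinarith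
  have hεn8 : 8 * Real.log k ≤ ε * Real.log n := by nlinarith [mul_pos hLpos hlogk]
  set x' : ℝ := 4 * L * Real.log k / (ε * Real.log n) with hx'def
  have hx'0 : 0 ≤ x' := by rw [hx'def]; positivity
  have hx'h : x' ≤ 1/2 := by
    rw [hx'def, div_le_iff₀ (by positivity)]
    nlinarith
  clear_value x'
  set T : ℕ := ⌊(1 - ε) * Real.logb ((k:ℝ) - 1) (n:ℝ)⌋₊ with hTdef
  clear_value T
  -- monotonicity
  have hstepsub : ∀ t : ℕ, nset edges h v t ⊆ nset edges h v (t+1) := by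
    intro t; rw [nset]; exact Finset.subset_union_left
  have hmono : ∀ {t u : ℕ}, t ≤ u → nset edges h v t ⊆ nset edges h v u := by
    intro t u htu
    induction htu with
    | refl => exact Finset.Subset.refl _
    | step _ ih => exact ih.trans (hstepsub _)
  have hvmem : ∀ t, v ∈ nset edges h v t := by
    intro t
    apply hmono (Nat.zero_le t)
    rw [nset]; exact Finset.mem_singleton_self v
  have hcard1 : ∀ t, (1:ℝ) ≤ ((nset edges h v t).card : ℝ) := by
    intro t
    have : 0 < (nset edges h v t).card := Finset.card_pos.2 ⟨v, hvmem t⟩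
    exact_mod_cast this
  -- key expansion step
  have hstep : ∀ t : ℕ, t < T → ((nset edges h v t).card : ℝ) ≤ (n:ℝ) ^ ((1:ℝ) - ε/2) →
      ((k:ℝ) - 1 - x') * ((nset edges h v t).card : ℝ)
        ≤ ((nset edges h v (t+1)).card : ℝ) := by
    intro t htT hsmall
    set S := nset edges h v t with hSdef
    set E' : Finset ι := Finset.univ.filter (fun i => h i ∈ S) with hE'def
    have himg : E'.image h = S := by
      apply Finset.Subset.antisymm
      · intro w hw
        rcases Finset.mem_image.1 hw with ⟨i, hi, rfl⟩
        exact (Finset.mem_filter.1 hi).2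
      · intro w hw
        rcases hocc w (hmono htT.le hw) with ⟨i, rfl⟩
        exact Finset.mem_image.2 ⟨i, Finset.mem_filter.2 ⟨Finset.mem_univ _, hw⟩, rfl⟩
    have hEcard : (E'.card : ℝ) = (S.card : ℝ) := by
      rw [← himg, Finset.card_image_of_injective _ hinj]
    have hsub : (E'.biUnion fun i => (edges i).toFinset) ⊆ nset edges h v (t+1) := by
      intro w hw
      rcases Finset.mem_biUnion.1 hw with ⟨i, hi, hwi⟩
      rw [nset]
      exact Finset.mem_union_right _ (Finset.mem_filter.2 ⟨Finset.mem_univ _,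
        ⟨i, (Finset.mem_filter.1 hi).2, Multiset.mem_toFinset.1 hwi⟩⟩)
    have hVle : (((E'.biUnion fun i => (edges i).toFinset).card : ℕ) : ℝ)
        ≤ ((nset edges h v (t+1)).card : ℝ) := by
      exact_mod_cast Finset.card_le_card hsub
    have hS0 : (0:ℝ) ≤ (S.card : ℝ) := Nat.cast_nonneg _
    by_cases hc : (E'.card : ℝ) ≤ Real.log (Real.log (Fintype.card V))
    · have h2 := hPropE.2 E' hc
      have h3 : ((k:ℝ) - 1 - x') * (S.card : ℝ) ≤ ((k:ℝ) - 1) * (E'.card : ℝ) := by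
        rw [hEcard]
        exact mul_le_mul_of_nonneg_right (by linarith only [hx'0]) hS0
      linarith only [h2, h3, hVle]
    · push_neg at hc
      have hE1 : (1:ℝ) ≤ (E'.card : ℝ) := by rw [hEcard]; exact hcard1 t
      have hkn : (k:ℝ) < (n:ℝ) ^ (ε/2 : ℝ) := by
        have h1 : Real.log k < ε/2 * Real.log n := by linarith only [hεn8, hlogk]
        calc (k:ℝ) = Real.exp (Real.log k) := (Real.exp_log (by positivity)).symm
          _ < Real.exp (ε/2 * Real.log n) := Real.exp_lt_exp.2 h1
          _ = (n:ℝ) ^ (ε/2 : ℝ) := by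
              rw [Real.rpow_def_of_pos hn0', mul_comm]
      have hnk : (n:ℝ) ^ ((1:ℝ) - ε/2) < (n:ℝ) / k := by
        rw [lt_div_iff₀ (by positivity : (0:ℝ) < (k:ℝ))]
        calc (n:ℝ) ^ ((1:ℝ) - ε/2) * k < (n:ℝ) ^ ((1:ℝ) - ε/2) * (n:ℝ) ^ (ε/2 : ℝ) :=
              mul_lt_mul_of_pos_left hkn (by positivity)
          _ = (n:ℝ) ^ ((1:ℝ)) := by rw [← Real.rpow_add hn0']; ring_nf
          _ = (n:ℝ) := Real.rpow_one _
      have hElt : (E'.card : ℝ) < (Fintype.card V : ℝ) / k := by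
        rw [hcardV]; rw [hEcard]; exact lt_of_le_of_lt hsmall hnk
      have h1 := hPropE.1 E' hc hElt
      have hxval : xval k (Fintype.card V) E'.card ≤ x' := by
        rw [hcardV]
        have hsle : (E'.card : ℝ) ≤ (n:ℝ) ^ ((1:ℝ) - ε/2) := by rw [hEcard]; exact hsmall
        have hlogs : Real.log (E'.card) ≤ (1 - ε/2) * Real.log n := by
          calc Real.log (E'.card) ≤ Real.log ((n:ℝ) ^ ((1:ℝ) - ε/2)) :=
                Real.log_le_log (by linarith) hsle
            _ = (1 - ε/2) * Real.log n := Real.log_rpow hn0' _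
        have hlogb : ε/4 * (Real.log n / Real.log k) + 1
            ≤ Real.logb k ((n:ℝ) / (E'.card : ℝ)) := by
          have hlq : Real.logb k ((n:ℝ) / (E'.card : ℝ))
              = (Real.log n - Real.log (E'.card : ℝ)) / Real.log k := by
            rw [Real.logb, Real.log_div (by positivity) (by linarith : (E'.card:ℝ) ≠ 0)]
          rw [hlq, le_div_iff₀ hlogk]
          have hmul : (ε/4 * (Real.log n / Real.log k) + 1) * Real.log k
              = ε/4 * Real.log n + Real.log k := by field_simp
          rw [hmul]
          linarith only [hlogs, hεn8, hlogk]
        have hDpos : (0:ℝ) < ε/4 * (Real.log n / Real.log k) := by positivity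
        have hD : ε/4 * (Real.log n / Real.log k) ≤ Real.logb k ((n:ℝ) / (E'.card:ℝ)) - 1 := by
          linarith
        calc xval k n E'.card
            = L / (Real.logb k ((n:ℝ) / (E'.card:ℝ)) - 1) := by
              simp only [xval]
              rw [hLdef]
          _ ≤ L / (ε/4 * (Real.log n / Real.log k)) :=
              div_le_div_of_nonneg_left hLpos.le hDpos hD
          _ = x' := by
              rw [hx'def]; field_simp
      calc ((k:ℝ) - 1 - x') * (S.card : ℝ)
          ≤ ((k:ℝ) - 1 - xval k (Fintype.card V) E'.card) * (E'.card : ℝ) := by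
            rw [← hEcard]
            exact mul_le_mul_of_nonneg_right (by linarith only [hxval]) (Nat.cast_nonneg _)
        _ ≤ _ := h1
        _ ≤ _ := hVle
  -- main case split
  by_cases hbig : (n:ℝ) ^ ((1:ℝ) - ε/2) < ((nset edges h v T).card : ℝ)
  · have hexp1 : Real.exp (-(2*B+1)/ε) ≤ 1 := by
      have h0 : -(2*B+1)/ε ≤ 0 := by
        rw [neg_div, neg_nonpos]
        exact div_nonneg (by linarith only [hBpos]) hε.le
      calc Real.exp (-(2*B+1)/ε) ≤ Real.exp 0 := Real.exp_le_exp.2 h0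
        _ = 1 := Real.exp_zero
    have h1 : (n:ℝ) ^ (1 - ε) * Real.exp (-(2*B+1)/ε) ≤ (n:ℝ) ^ ((1:ℝ) - ε/2) := by
      calc (n:ℝ) ^ (1 - ε) * Real.exp (-(2*B+1)/ε) ≤ (n:ℝ) ^ (1 - ε) * 1 :=
            mul_le_mul_of_nonneg_left hexp1 (by positivity)
        _ = (n:ℝ) ^ (1 - ε) := mul_one _
        _ ≤ (n:ℝ) ^ ((1:ℝ) - ε/2) := Real.rpow_le_rpow_of_exponent_le hn1 (by linarith only [hε])
    linarith only [h1, hbig]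
  · push_neg at hbig
    have hall : ∀ t, t ≤ T → ((nset edges h v t).card : ℝ) ≤ (n:ℝ) ^ ((1:ℝ) - ε/2) := by
      intro t ht
      exact le_trans (by exact_mod_cast Finset.card_le_card (hmono ht)) hbig
    have hfac : (0:ℝ) ≤ (k:ℝ) - 1 - x' := by linarith
    have hind : ∀ t, t ≤ T → ((k:ℝ) - 1 - x') ^ t ≤ ((nset edges h v t).card : ℝ) := by
      intro t
      induction t with
      | zero => intro _; rw [nset]; simp
      | succ t ih =>
        intro ht
        have ht' : t < T := Nat.lt_of_succ_le ht
        calc ((k:ℝ) - 1 - x') ^ (t+1) = ((k:ℝ) - 1 - x') * ((k:ℝ) - 1 - x') ^ t := by ring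
          _ ≤ ((k:ℝ) - 1 - x') * ((nset edges h v t).card : ℝ) :=
              mul_le_mul_of_nonneg_left (ih ht'.le) hfac
          _ ≤ _ := hstep t ht' (hall t ht'.le)
    have hT := hind T le_rfl
    -- final computation
    set u : ℝ := (1 - ε) * Real.logb ((k:ℝ) - 1) (n:ℝ) with hudef
    clear_value u
    have hu0 : 0 ≤ u := by
      rw [hudef]
      apply mul_nonneg (by linarith)
      exact Real.logb_nonneg hk1 hn1
    have hTu : u - 1 ≤ (T:ℝ) := by
      have := Nat.lt_floor_add_one u
      rw [hTdef]; push_cast; linarith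
    have hTu2 : (T:ℝ) ≤ u := by rw [hTdef]; exact_mod_cast Nat.floor_le hu0
    set y : ℝ := x' / ((k:ℝ) - 1) with hydef
    clear_value y
    have hy0 : 0 ≤ y := by
      rw [hydef]
      exact div_nonneg hx'0 hk1'.le
    have hyh : y ≤ 1/2 := by
      rw [hydef, div_le_iff₀ hk1']
      linarith only [hx'h, hk1]
    have h1y : Real.exp (-(2*y)) ≤ 1 - y := exp_neg_two_le hy0 hyh
    have hpow : ((k:ℝ) - 1 - x') ^ T = ((k:ℝ) - 1) ^ T * (1 - y) ^ T := by
      rw [← mul_pow]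
      congr 1
      rw [hydef]; field_simp [hk1'.ne']
    have hyT : y * (T:ℝ) ≤ B / ε := by
      have hTb : (T:ℝ) ≤ Real.log n / Real.log ((k:ℝ) - 1) := by
        apply hTu2.trans
        rw [hudef, Real.logb]
        have h0 : 0 ≤ Real.log n / Real.log ((k:ℝ)-1) := by positivity
        linarith only [mul_nonneg hε.le h0, h0]
      have h1 : y * (T:ℝ) ≤ y * (Real.log n / Real.log ((k:ℝ)-1)) :=
        mul_le_mul_of_nonneg_left hTb hy0
      have h2 : y * (Real.log n / Real.log ((k:ℝ)-1)) = B / ε := by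
        rw [hydef, hx'def, hBdef]
        field_simp
      linarith only [h1, h2]
    have h1yT : Real.exp (-(2*B)/ε) ≤ (1 - y) ^ T := by
      calc Real.exp (-(2*B)/ε) ≤ Real.exp ((T:ℝ) * (-(2*y))) := by
            apply Real.exp_le_exp.2
            have ha : (T:ℝ) * -(2*y) = -(2*(y*(T:ℝ))) := by ring
            have hb : -(2*B)/ε = -(2*(B/ε)) := by ring
            rw [ha, hb]
            linarith only [hyT]
        _ = (Real.exp (-(2*y))) ^ T := by rw [← Real.exp_nat_mul]
        _ ≤ (1 - y) ^ T := pow_le_pow_left₀ (Real.exp_pos _).le h1y T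
    have hpowk : (n:ℝ) ^ ((1:ℝ) - ε) / ((k:ℝ) - 1) ≤ ((k:ℝ) - 1) ^ T := by
      have h2 : ((k:ℝ) - 1) ^ (u - 1 : ℝ) ≤ ((k:ℝ) - 1) ^ ((T:ℝ) : ℝ) :=
        Real.rpow_le_rpow_of_exponent_le hk1.le hTu
      have h3 : ((k:ℝ) - 1) ^ (u - 1 : ℝ) = (n:ℝ) ^ ((1:ℝ) - ε) / ((k:ℝ) - 1) := by
        rw [Real.rpow_sub hk1', Real.rpow_one]
        congr 1
        rw [hudef, mul_comm, Real.rpow_mul hk1'.le,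
          Real.rpow_logb hk1' (by linarith : ((k:ℝ)-1) ≠ 1) hn0']
      have h4 : ((k:ℝ) - 1) ^ ((T:ℝ) : ℝ) = ((k:ℝ) - 1) ^ T := Real.rpow_natCast _ T
      rw [← h4, ← h3]; exact h2
    have hk_exp : (k:ℝ) - 1 ≤ Real.exp (1/ε) := by
      have h1 : Real.log ((k:ℝ) - 1) ≤ 1/ε := by
        rw [le_div_iff₀ hε]
        have h2 : Real.log ((k:ℝ)-1) ≤ Real.log k := Real.log_le_log hk1' (by linarith)
        have h3 := mul_le_mul_of_nonneg_right h2 hε.le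
        linarith only [h3, hεlogk]
      calc (k:ℝ) - 1 = Real.exp (Real.log ((k:ℝ)-1)) := (Real.exp_log hk1').symm
        _ ≤ _ := Real.exp_le_exp.2 h1
    have hke : ((k:ℝ) - 1) * Real.exp (-(1:ℝ)/ε) ≤ 1 := by
      have h5 : Real.exp (-(1:ℝ)/ε) * Real.exp ((1:ℝ)/ε) = 1 := by
        rw [← Real.exp_add]; ring_nf; exact Real.exp_zero
      have h6 := mul_le_mul_of_nonneg_right hk_exp (Real.exp_pos (-(1:ℝ)/ε)).le
      linarith only [h5, h6]
    have hsplit : Real.exp (-(2*B+1)/ε)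
        = Real.exp (-(2*B)/ε) * Real.exp (-(1:ℝ)/ε) := by
      rw [← Real.exp_add]
      congr 1
      field_simp
      ring
    have hnpos : (0:ℝ) < (n:ℝ) ^ ((1:ℝ) - ε) := by positivity
    calc (n:ℝ) ^ (1 - ε) * Real.exp (-(2*B+1)/ε)
        = ((n:ℝ) ^ ((1:ℝ) - ε) / ((k:ℝ) - 1)) * Real.exp (-(2*B)/ε)
            * (((k:ℝ) - 1) * Real.exp (-(1:ℝ)/ε)) := by
          rw [hsplit]; field_simp
      _ ≤ ((n:ℝ) ^ ((1:ℝ) - ε) / ((k:ℝ) - 1)) * Real.exp (-(2*B)/ε) * 1 := by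
          exact mul_le_mul_of_nonneg_left hke
            (mul_nonneg (div_nonneg (Real.rpow_nonneg hn0'.le _) hk1'.le) (Real.exp_pos _).le)
      _ = ((n:ℝ) ^ ((1:ℝ) - ε) / ((k:ℝ) - 1)) * Real.exp (-(2*B)/ε) := mul_one _
      _ ≤ ((k:ℝ) - 1) ^ T * Real.exp (-(2*B)/ε) :=
          mul_le_mul_of_nonneg_right hpowk (Real.exp_pos _).le
      _ ≤ ((k:ℝ) - 1) ^ T * (1 - y) ^ T :=
          mul_le_mul_of_nonneg_left h1yT (pow_nonneg hk1'.le T)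
      _ = ((k:ℝ) - 1 - x') ^ T := hpow.symm
      _ ≤ ((nset edges h v T).card : ℝ) := hT
end

section
/- For any constants a, b > 0 there exists D_0 = D_0(a,b) such that for every D ≥ D_0 and every integer j ≥ 2/b one has ∏_{i=1}^{j} (1 − a/(ib + D)) ≥ j^{−a/b}·(bD)^{−a/b}·e^{−a²/(bD)}. -/
set_option maxHeartbeats 1000000

open Real Finset

private lemma aux_key (t : ℝ) (ht0 : 0 ≤ t) (ht : t ≤ 1/2) :
    Real.exp (-(t + 2*t^2)) ≤ 1 - t := by
  have h1 : 0 < 1 - t := by linarith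
  have h4 : t/(1-t) ≤ t + 2*t^2 := by
    rw [div_le_iff₀ h1]; nlinarith
  have h2 : (1-t)⁻¹ ≤ Real.exp (t + 2*t^2) := by
    have h5 := Real.add_one_le_exp (t/(1-t))
    have h3 : (1-t)⁻¹ = t/(1-t) + 1 := by field_simp; ring
    calc (1-t)⁻¹ = t/(1-t) + 1 := h3
      _ ≤ Real.exp (t/(1-t)) := h5
      _ ≤ Real.exp (t + 2*t^2) := Real.exp_le_exp.mpr h4
  rw [Real.exp_neg]
  exact (inv_le_comm₀ (Real.exp_pos _) h1).mpr h2

private lemma aux_step (a b D x : ℝ) (ha : 0 < a) (hb : 0 < b) (hD : 0 < D) (hx : 0 ≤ x) :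
    a/(x*b+b+D) + 2*(a/(x*b+b+D))^2 ≤
      ((a/b)*Real.log (x*b+b+D) - (2*a^2/b)/(x*b+b+D))
        - ((a/b)*Real.log (x*b+D) - (2*a^2/b)/(x*b+D)) := by
  have hu : 0 < x*b+D := by nlinarith
  have hv : 0 < x*b+b+D := by nlinarith
  have hlog : b/(x*b+b+D) ≤ Real.log (x*b+b+D) - Real.log (x*b+D) := by
    rw [← Real.log_div (ne_of_gt hv) (ne_of_gt hu)]
    have := Real.one_sub_inv_le_log_of_pos (x := (x*b+b+D)/(x*b+D)) (by positivity)
    have heq : 1 - ((x*b+b+D)/(x*b+D))⁻¹ = b/(x*b+b+D) := by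
      rw [inv_div]; field_simp; ring
    linarith [heq ▸ this]
  have h1 : a/(x*b+b+D) ≤ (a/b) * (Real.log (x*b+b+D) - Real.log (x*b+D)) := by
    calc a/(x*b+b+D) = (a/b) * (b/(x*b+b+D)) := by field_simp
      _ ≤ (a/b) * (Real.log (x*b+b+D) - Real.log (x*b+D)) :=
          mul_le_mul_of_nonneg_left hlog (by positivity)
  have h2 : 2*(a/(x*b+b+D))^2 ≤ (2*a^2/b)/(x*b+D) - (2*a^2/b)/(x*b+b+D) := by
    have key : (2*a^2/b)/(x*b+D) - (2*a^2/b)/(x*b+b+D) = 2*a^2/((x*b+D)*(x*b+b+D)) := by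
      field_simp; ring
    rw [key, show 2*(a/(x*b+b+D))^2 = (2*a^2)/((x*b+b+D)*(x*b+b+D)) from by
      rw [div_pow]; ring]
    gcongr <;> nlinarith [hu, hv]
  linarith

/-- for any constants `a, b > 0` there is `D₀ = D₀(a,b)` such that for all
`D ≥ D₀` and all integers `j ≥ 2/b`,
`∏_{i=1}^{j} (1 - a/(ib + D)) ≥ j^{-a/b}·(bD)^{-a/b}·e^{-a²/(bD)}`. -/
theorem statement_12 (a b : ℝ) (ha : 0 < a) (hb : 0 < b) :
    ∃ D₀ : ℝ, ∀ D : ℝ, D₀ ≤ D → ∀ j : ℕ, 2 / b ≤ (j : ℝ) →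
      (j : ℝ) ^ (-(a / b)) * (b * D) ^ (-(a / b)) * Real.exp (-(a ^ 2) / (b * D))
        ≤ ∏ i ∈ Finset.Icc 1 j, (1 - a / ((i : ℝ) * b + D)) := by
  refine ⟨max 2 (2*a), ?_⟩
  intro D hD j hj
  have hD2 : (2:ℝ) ≤ D := le_trans (le_max_left _ _) hD
  have hDa : 2*a ≤ D := le_trans (le_max_right _ _) hD
  have hD0 : (0:ℝ) < D := by linarith
  have hjb : (2:ℝ) ≤ (j:ℝ) * b := by
    rw [div_le_iff₀ hb] at hj; linarith
  have hjpos : (0:ℝ) < (j:ℝ) := by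
    by_contra h
    push_neg at h
    nlinarith
  have hbase : ((j:ℝ)*b+D)/D ≤ ((j:ℝ)*(b*D))/2 := by
    rw [div_le_div_iff₀ hD0 (by norm_num)]
    nlinarith [mul_nonneg (mul_nonneg (by linarith : (0:ℝ) ≤ (j:ℝ)*b) hD0.le)
        (by linarith : (0:ℝ) ≤ D - 2),
      mul_nonneg (by linarith : (0:ℝ) ≤ (j:ℝ)*b - 2) (by linarith : (0:ℝ) ≤ D - 2)]
  set A := a/b with hA
  have hApos : 0 < A := div_pos ha hb
  -- pointwise bound for each factor
  have hfac : ∀ i ∈ Finset.Icc 1 j,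
      Real.exp (-(a/((i:ℝ)*b+D) + 2*(a/((i:ℝ)*b+D))^2)) ≤ 1 - a/((i:ℝ)*b+D) := by
    intro i hi
    have hi1 : 1 ≤ i := (Finset.mem_Icc.mp hi).1
    have hipos : (1:ℝ) ≤ (i:ℝ) := by exact_mod_cast hi1
    have hden : 0 < (i:ℝ)*b+D := by nlinarith
    refine aux_key _ (by positivity) ?_
    rw [div_le_iff₀ hden]
    nlinarith
  have hprodpos : ∀ i ∈ Finset.Icc 1 j, (0:ℝ) ≤ Real.exp (-(a/((i:ℝ)*b+D) + 2*(a/((i:ℝ)*b+D))^2)) :=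
    fun i _ => (Real.exp_pos _).le
  have hprod : ∏ i ∈ Finset.Icc 1 j, Real.exp (-(a/((i:ℝ)*b+D) + 2*(a/((i:ℝ)*b+D))^2))
      ≤ ∏ i ∈ Finset.Icc 1 j, (1 - a/((i:ℝ)*b+D)) :=
    Finset.prod_le_prod hprodpos hfac
  rw [← Real.exp_sum] at hprod
  -- sum bound via telescoping
  set F : ℕ → ℝ := fun n => (a/b)*Real.log ((n:ℝ)*b+D) - (2*a^2/b)/((n:ℝ)*b+D) with hF
  have hsum : ∑ i ∈ Finset.Icc 1 j, (a/((i:ℝ)*b+D) + 2*(a/((i:ℝ)*b+D))^2) ≤ F j - F 0 := by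
    have hIcc : Finset.Icc 1 j = Finset.Ico 1 (j+1) := by
      rw [Finset.Ico_add_one_right_eq_Icc]
    rw [hIcc, Finset.sum_Ico_eq_sum_range]
    have : ∑ i ∈ Finset.range (j+1-1), (a/(((1+i:ℕ):ℝ)*b+D) + 2*(a/(((1+i:ℕ):ℝ)*b+D))^2)
        ≤ ∑ i ∈ Finset.range j, (F (i+1) - F i) := by
      simp only [Nat.add_sub_cancel]
      refine Finset.sum_le_sum fun k _ => ?_
      have := aux_step a b D (k:ℝ) ha hb hD0 (Nat.cast_nonneg k)
      have hcast : ((1+k:ℕ):ℝ) = (k:ℝ) + 1 := by push_cast; ring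
      have hcast2 : ((k+1:ℕ):ℝ) = (k:ℝ) + 1 := by push_cast; ring
      simp only [hF, hcast, hcast2]
      convert this using 3
      · rfl
      all_goals ring_nf
    calc _ ≤ ∑ i ∈ Finset.range j, (F (i+1) - F i) := this
      _ = F j - F 0 := Finset.sum_range_sub F j
  have hFj : F j - F 0 = (a/b)*(Real.log ((j:ℝ)*b+D) - Real.log D)
      + (2*a^2/b)*(1/D - 1/((j:ℝ)*b+D)) := by
    simp only [hF]
    push_cast
    field_simp
    ring
  -- exp of negated bound
  have hmono : Real.exp (-(F j - F 0))
      ≤ Real.exp (-(∑ i ∈ Finset.Icc 1 j, (a/((i:ℝ)*b+D) + 2*(a/((i:ℝ)*b+D))^2))) := by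
    apply Real.exp_le_exp.mpr; linarith
  have hsumneg : -(∑ i ∈ Finset.Icc 1 j, (a/((i:ℝ)*b+D) + 2*(a/((i:ℝ)*b+D))^2))
      = ∑ i ∈ Finset.Icc 1 j, (-(a/((i:ℝ)*b+D) + 2*(a/((i:ℝ)*b+D))^2)) := by
    rw [Finset.sum_neg_distrib]
  -- main chain
  have hjbD : 0 < (j:ℝ)*b+D := by nlinarith
  have hmain : (j:ℝ) ^ (-A) * (b * D) ^ (-A) * Real.exp (-(a ^ 2) / (b * D))
      ≤ Real.exp (-(F j - F 0)) := by
    rw [hFj]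
    have hexp1 : Real.exp (-((a/b)*(Real.log ((j:ℝ)*b+D) - Real.log D)
        + (2*a^2/b)*(1/D - 1/((j:ℝ)*b+D))))
        = (((j:ℝ)*b+D)/D) ^ (-A) * Real.exp (-(2*a^2/b)*(1/D - 1/((j:ℝ)*b+D))) := by
      rw [Real.rpow_def_of_pos (by positivity), ← Real.exp_add,
        Real.log_div (ne_of_gt hjbD) (ne_of_gt hD0)]
      rw [hA]
      ring_nf
    rw [hexp1]
    -- it suffices to compare the two sides
    have key1 : Real.exp (-(a^2)/(b*D)) = Real.exp (a^2/(b*D)) * Real.exp (-(2*a^2)/(b*D)) := by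
      rw [← Real.exp_add]; congr 1; field_simp; ring
    have key2 : Real.exp (-(2*a^2)/(b*D)) ≤ Real.exp (-(2*a^2/b)*(1/D - 1/((j:ℝ)*b+D))) := by
      apply Real.exp_le_exp.mpr
      have h1 : 0 ≤ (2*a^2/b)*(1/((j:ℝ)*b+D)) := by positivity
      have : -(2*a^2/b)*(1/D - 1/((j:ℝ)*b+D)) = -(2*a^2)/(b*D) + (2*a^2/b)*(1/((j:ℝ)*b+D)) := by
        field_simp; ring
      linarith [this]
    have key3 : (j:ℝ) ^ (-A) * (b * D) ^ (-A) * Real.exp (a^2/(b*D))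
        ≤ (((j:ℝ)*b+D)/D) ^ (-A) := by
      have hmul : (j:ℝ) ^ (-A) * (b * D) ^ (-A) = ((j:ℝ)*(b*D)) ^ (-A) :=
        (Real.mul_rpow hjpos.le (by positivity)).symm
      have hexp2 : Real.exp (a^2/(b*D)) ≤ (2:ℝ) ^ A := by
        rw [Real.rpow_def_of_pos (by norm_num)]
        apply Real.exp_le_exp.mpr
        have hlog2 : (0.6931471803:ℝ) < Real.log 2 := Real.log_two_gt_d9
        have haD : a/D ≤ 1/2 := by rw [div_le_iff₀ hD0]; linarith
        have : a^2/(b*D) = A * (a/D) := by rw [hA]; field_simp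
        rw [this]
        have : A * (a/D) ≤ A * (1/2) := by
          apply mul_le_mul_of_nonneg_left haD hApos.le
        calc A * (a/D) ≤ A * (1/2) := this
          _ ≤ Real.log 2 * A := by nlinarith
      have h2A : ((j:ℝ)*(b*D)) ^ (-A) * (2:ℝ) ^ A = (((j:ℝ)*(b*D))/2) ^ (-A) := by
        rw [Real.div_rpow (by positivity) (by norm_num), Real.rpow_neg (by norm_num : (0:ℝ) ≤ 2),
          div_eq_mul_inv, inv_inv]
      calc (j:ℝ) ^ (-A) * (b * D) ^ (-A) * Real.exp (a^2/(b*D))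
          ≤ ((j:ℝ)*(b*D)) ^ (-A) * (2:ℝ) ^ A := by
            rw [hmul]
            apply mul_le_mul_of_nonneg_left hexp2 (by positivity)
        _ = (((j:ℝ)*(b*D))/2) ^ (-A) := h2A
        _ ≤ (((j:ℝ)*b+D)/D) ^ (-A) :=
            Real.rpow_le_rpow_of_nonpos (by positivity) hbase (by linarith)
    calc (j:ℝ) ^ (-A) * (b * D) ^ (-A) * Real.exp (-(a ^ 2) / (b * D))
        = ((j:ℝ) ^ (-A) * (b * D) ^ (-A) * Real.exp (a^2/(b*D))) * Real.exp (-(2*a^2)/(b*D)) := by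
          rw [key1]; ring
      _ ≤ (((j:ℝ)*b+D)/D) ^ (-A) * Real.exp (-(2*a^2)/(b*D)) := by
          apply mul_le_mul_of_nonneg_right key3 (Real.exp_pos _).le
      _ ≤ (((j:ℝ)*b+D)/D) ^ (-A) * Real.exp (-(2*a^2/b)*(1/D - 1/((j:ℝ)*b+D))) := by
          apply mul_le_mul_of_nonneg_left key2 (by positivity)
  calc (j:ℝ) ^ (-(a/b)) * (b * D) ^ (-(a/b)) * Real.exp (-(a ^ 2) / (b * D))
      ≤ Real.exp (-(F j - F 0)) := hmain
    _ ≤ Real.exp (-(∑ i ∈ Finset.Icc 1 j, (a/((i:ℝ)*b+D) + 2*(a/((i:ℝ)*b+D))^2))) := hmono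
    _ = Real.exp (∑ i ∈ Finset.Icc 1 j, -(a/((i:ℝ)*b+D) + 2*(a/((i:ℝ)*b+D))^2)) := by
        rw [hsumneg]
    _ ≤ ∏ i ∈ Finset.Icc 1 j, (1 - a/((i:ℝ)*b+D)) := hprod
end

section
/- Let k ≥ 2, c > 0, and p = ck/binom(n−1, k−1), and assume cn is an integer. Then for every set 𝓟 of k-uniform hypergraphs on vertex set {1,…,n}, ℙ(H_{n,cn,k} ∉ 𝓟) ≤ K·√n · ℙ(H_{n,p,k} ∉ 𝓟), where K > 0 is a constant depending only on c and k (and not on n or 𝓟), for all sufficiently large n. -/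
open Filter Real

attribute [local instance] Classical.propDecidable

/-- Probability that `H_{n,m,k}` (a uniformly random set of `m` distinct `k`-element
edges) satisfies `P`. -/
noncomputable def probUnif (n m k : ℕ) (P : Finset (Finset (Fin n)) → Prop) : ℝ :=
  ((Finset.univ.filter (fun E : Finset (Finset (Fin n)) =>
      E.card = m ∧ (∀ e ∈ E, e.card = k) ∧ P E)).card : ℝ) /
  ((Finset.univ.filter (fun E : Finset (Finset (Fin n)) =>
      E.card = m ∧ ∀ e ∈ E, e.card = k)).card : ℝ)

/-- Probability that `H_{n,p,k}` (each `k`-element subset an edge independently with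
probability `p`) satisfies `P`. -/
noncomputable def probBinom (n k : ℕ) (p : ℝ) (P : Finset (Finset (Fin n)) → Prop) : ℝ :=
  ∑ E ∈ Finset.univ.filter (fun E : Finset (Finset (Fin n)) => ∀ e ∈ E, e.card = k),
    if P E then p ^ E.card * (1 - p) ^ (Nat.choose n k - E.card) else 0


lemma aux_sqrt_pi_le_stirlingSeq {n : ℕ} (hn : 1 ≤ n) :
    Real.sqrt Real.pi ≤ Stirling.stirlingSeq n := by
  obtain ⟨n', rfl⟩ : ∃ n', n = n' + 1 := ⟨n - 1, by omega⟩
  refine le_of_tendsto Stirling.tendsto_stirlingSeq_sqrt_pi ?_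
  filter_upwards [eventually_ge_atTop (n' + 1)] with m hm
  obtain ⟨m', rfl⟩ : ∃ m', m = m' + 1 := ⟨m - 1, by omega⟩
  exact Stirling.stirlingSeq'_antitone (by omega : n' ≤ m')

lemma aux_stirlingSeq_le {n : ℕ} (hn : 1 ≤ n) :
    Stirling.stirlingSeq n ≤ Real.exp 1 / Real.sqrt 2 := by
  obtain ⟨n', rfl⟩ : ∃ n', n = n' + 1 := ⟨n - 1, by omega⟩
  rw [← Stirling.stirlingSeq_one]
  exact Stirling.stirlingSeq'_antitone (Nat.zero_le n')

lemma aux_fact_lower {n : ℕ} (hn : 1 ≤ n) :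
    Real.sqrt n * (n : ℝ) ^ n / Real.exp 1 ^ n ≤ (n.factorial : ℝ) := by
  have hπ : (1 : ℝ) ≤ Real.sqrt Real.pi := by
    rw [show (1:ℝ) = Real.sqrt 1 by simp]
    exact Real.sqrt_le_sqrt (by linarith [Real.pi_gt_three])
  have h := hπ.trans (aux_sqrt_pi_le_stirlingSeq hn)
  have hd : (0:ℝ) < Real.sqrt (2 * n) * ((n : ℝ) / Real.exp 1) ^ n := by
    have : (0:ℝ) < (n:ℝ) := by exact_mod_cast hn
    positivity
  rw [Stirling.stirlingSeq, le_div_iff₀ hd, one_mul] at h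
  refine le_trans ?_ h
  have hnp : (0:ℝ) ≤ (n:ℝ) := Nat.cast_nonneg n
  have hs : Real.sqrt n ≤ Real.sqrt (2*n) := Real.sqrt_le_sqrt (by linarith)
  rw [div_pow, mul_div_assoc]
  exact mul_le_mul_of_nonneg_right hs (by positivity)

lemma aux_fact_upper {n : ℕ} (hn : 1 ≤ n) :
    (n.factorial : ℝ) ≤ Real.exp 1 * (Real.sqrt n * (n : ℝ) ^ n / Real.exp 1 ^ n) := by
  have h := aux_stirlingSeq_le hn
  have hnp : (0:ℝ) < (n:ℝ) := by exact_mod_cast hn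
  have hd : (0:ℝ) < Real.sqrt (2 * n) * ((n : ℝ) / Real.exp 1) ^ n := by positivity
  rw [Stirling.stirlingSeq, div_le_iff₀ hd] at h
  refine h.trans (le_of_eq ?_)
  rw [div_pow, Real.sqrt_mul (by norm_num : (0:ℝ) ≤ 2)]
  have h2 : Real.sqrt 2 ≠ 0 := by positivity
  field_simp

lemma aux_core (a b : ℕ) (ha : 1 ≤ a) (hb : 1 ≤ b) :
    1 ≤ Real.exp 1 ^ 2 * Real.sqrt a *
      (((a + b).choose a : ℝ) * ((a : ℝ) / ((a : ℝ) + b)) ^ a *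
        ((b : ℝ) / ((a : ℝ) + b)) ^ b) := by
  set e := Real.exp 1 with he
  have hepos : (0:ℝ) < e := Real.exp_pos 1
  have hA : (0:ℝ) < (a:ℝ) := by exact_mod_cast ha
  have hB : (0:ℝ) < (b:ℝ) := by exact_mod_cast hb
  have hN : (0:ℝ) < (a:ℝ) + b := by linarith
  set C : ℝ := ((a + b).choose a : ℝ) with hCdef
  have hC0 : (0:ℝ) ≤ C := Nat.cast_nonneg _
  -- factorial identity
  have hfact : C * (a.factorial : ℝ) * (b.factorial : ℝ) = ((a + b).factorial : ℝ) := by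
    have := Nat.choose_mul_factorial_mul_factorial (Nat.le_add_right a b)
    rw [Nat.add_sub_cancel_left] at this
    rw [hCdef]
    exact_mod_cast congrArg (Nat.cast (R := ℝ)) this
  -- lower bound on (a+b)!
  have hfN : Real.sqrt ((a:ℝ) + b) * ((a:ℝ) + b) ^ (a + b) / e ^ (a + b)
      ≤ ((a + b).factorial : ℝ) := by
    have h := aux_fact_lower (n := a + b) (by omega)
    push_cast at h
    exact h
  -- upper bound on a! * b!
  have hfab : (a.factorial : ℝ) * (b.factorial : ℝ)
      ≤ e ^ 2 * Real.sqrt a * Real.sqrt b * (a:ℝ) ^ a * (b:ℝ) ^ b / e ^ (a + b) := by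
    have h1 := aux_fact_upper ha
    have h2 := aux_fact_upper hb
    calc (a.factorial : ℝ) * (b.factorial : ℝ)
        ≤ (e * (Real.sqrt a * (a:ℝ) ^ a / e ^ a)) * (e * (Real.sqrt b * (b:ℝ) ^ b / e ^ b)) :=
          mul_le_mul h1 h2 (Nat.cast_nonneg _) (by positivity)
      _ = e ^ 2 * Real.sqrt a * Real.sqrt b * (a:ℝ) ^ a * (b:ℝ) ^ b / e ^ (a + b) := by
          rw [pow_add]; field_simp
  -- combine
  have key : ((a:ℝ) + b) ^ (a + b) ≤ e ^ 2 * Real.sqrt a * C * (a:ℝ) ^ a * (b:ℝ) ^ b := by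
    have h3 : Real.sqrt ((a:ℝ) + b) * ((a:ℝ) + b) ^ (a + b) / e ^ (a + b)
        ≤ C * (e ^ 2 * Real.sqrt a * Real.sqrt b * (a:ℝ) ^ a * (b:ℝ) ^ b / e ^ (a + b)) := by
      calc Real.sqrt ((a:ℝ) + b) * ((a:ℝ) + b) ^ (a + b) / e ^ (a + b)
          ≤ ((a + b).factorial : ℝ) := hfN
        _ = C * ((a.factorial : ℝ) * (b.factorial : ℝ)) := by rw [← hfact]; ring
        _ ≤ C * (e ^ 2 * Real.sqrt a * Real.sqrt b * (a:ℝ) ^ a * (b:ℝ) ^ b / e ^ (a + b)) :=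
            mul_le_mul_of_nonneg_left hfab hC0
    rw [mul_div_assoc'] at h3
    rw [div_le_div_iff_of_pos_right (by positivity)] at h3
    -- h3 : √(a+b) * (a+b)^(a+b) ≤ C * (e^2 √a √b a^a b^b)
    have h4 : Real.sqrt b * ((a:ℝ) + b) ^ (a + b)
        ≤ Real.sqrt ((a:ℝ) + b) * ((a:ℝ) + b) ^ (a + b) := by
      have : Real.sqrt b ≤ Real.sqrt ((a:ℝ) + b) := Real.sqrt_le_sqrt (by linarith)
      exact mul_le_mul_of_nonneg_right this (by positivity)
    have h5 : Real.sqrt b * ((a:ℝ) + b) ^ (a + b)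
        ≤ Real.sqrt b * (e ^ 2 * Real.sqrt a * C * (a:ℝ) ^ a * (b:ℝ) ^ b) := by
      refine h4.trans (h3.trans (le_of_eq (by ring)))
    exact le_of_mul_le_mul_left h5 (Real.sqrt_pos.2 hB)
  have hrw : e ^ 2 * Real.sqrt a *
      (C * ((a : ℝ) / ((a : ℝ) + b)) ^ a * ((b : ℝ) / ((a : ℝ) + b)) ^ b)
      = e ^ 2 * Real.sqrt a * C * (a:ℝ) ^ a * (b:ℝ) ^ b / ((a:ℝ) + b) ^ (a + b) := by
    rw [div_pow, div_pow, pow_add]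
    field_simp
  rw [hrw, le_div_iff₀ (by positivity), one_mul]
  exact key

lemma aux_count (n m k : ℕ) :
    (Finset.univ.filter (fun E : Finset (Finset (Fin n)) =>
      E.card = m ∧ ∀ e ∈ E, e.card = k)).card = (n.choose k).choose m := by
  have h : (Finset.univ.filter (fun E : Finset (Finset (Fin n)) =>
      E.card = m ∧ ∀ e ∈ E, e.card = k))
      = (Finset.univ.powersetCard k).powersetCard m := by
    ext E
    simp only [Finset.mem_filter, Finset.mem_univ, true_and, Finset.mem_powersetCard,
      Finset.subset_iff, Finset.subset_univ]
    constructor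
    · rintro ⟨h1, h2⟩
      exact ⟨fun e he => by simp [Finset.mem_powersetCard, h2 e he], h1⟩
    · rintro ⟨h1, h2⟩
      refine ⟨h2, fun e he => ?_⟩
      exact (h1 he).2
  rw [h, Finset.card_powersetCard, Finset.card_powersetCard]
  simp

set_option maxHeartbeats 2000000 in
/-- for `k ≥ 2`, `c > 0`, `p = ck/C(n-1,k-1)`, `cn ∈ ℕ`: there is `K > 0`
depending only on `c` and `k` such that for all large `n` and every property `𝓟`,
`ℙ(H_{n,cn,k} ∉ 𝓟) ≤ K·√n·ℙ(H_{n,p,k} ∉ 𝓟)`. -/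
theorem statement_15 (k : ℕ) (hk : 2 ≤ k) (c : ℝ) (hc : 0 < c) :
    ∃ K : ℝ, 0 < K ∧ ∃ n₀ : ℕ, ∀ n : ℕ, n₀ ≤ n →
      ∀ m : ℕ, (m : ℝ) = c * n →
      ∀ P : Finset (Finset (Fin n)) → Prop,
        probUnif n m k (fun E => ¬ P E) ≤
          K * Real.sqrt n *
            probBinom n k (c * k / ((n - 1).choose (k - 1) : ℝ)) (fun E => ¬ P E) := by
  refine ⟨Real.exp 1 ^ 2 * (Real.sqrt c + 1), by positivity, ?_⟩
  have hcast : Tendsto (fun n : ℕ => (n : ℝ)) atTop atTop := tendsto_natCast_atTop_atTop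
  have hev : ∀ᶠ n : ℕ in atTop,
      (1 / c ≤ (n : ℝ)) ∧ (4 * (k.factorial : ℝ) * (c + 1) ≤ (n : ℝ)) ∧ 2 * k ≤ n := by
    filter_upwards [hcast.eventually_ge_atTop (1 / c),
      hcast.eventually_ge_atTop (4 * (k.factorial : ℝ) * (c + 1)),
      eventually_ge_atTop (2 * k)] with n h1 h2 h3
    exact ⟨h1, h2, h3⟩
  obtain ⟨n₀, hn₀⟩ := eventually_atTop.mp hev
  refine ⟨n₀, ?_⟩
  intro n hn m hm P
  obtain ⟨hc1, hc2, hc3⟩ := hn₀ n hn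
  have hkn : k ≤ n := by omega
  have hn1 : 1 ≤ n := by omega
  have hnR : (1:ℝ) ≤ (n:ℝ) := by exact_mod_cast hn1
  have hkf : (0:ℝ) < (k.factorial : ℝ) := by exact_mod_cast k.factorial_pos
  have hm1R : (1:ℝ) ≤ (m:ℝ) := by
    rw [hm]
    rw [div_le_iff₀ hc] at hc1
    linarith
  have hm1 : 1 ≤ m := by exact_mod_cast hm1R
  set N := n.choose k with hNdef
  -- m + 1 ≤ N
  have hmN : m + 1 ≤ N := by
    rw [hNdef]
    have hpc := Nat.pow_le_choose (α := ℝ) k n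
    push_cast at hpc
    have hn4 : (4:ℝ) ≤ (n:ℝ) := by exact_mod_cast (by omega : 4 ≤ n)
    have hdR : ((n:ℝ)/2) ≤ ((n + 1 - k : ℕ) : ℝ) := by
      have h2k : 2 * k ≤ n := hc3
      have hcastd : ((n + 1 - k : ℕ) : ℝ) = (n:ℝ) + 1 - k := by
        push_cast [Nat.cast_sub (by omega : k ≤ n + 1)]
        ring
      rw [hcastd]
      have : (k:ℝ) ≤ (n:ℝ)/2 := by
        have : ((2*k : ℕ):ℝ) ≤ (n:ℝ) := by exact_mod_cast h2k
        push_cast at this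
        linarith
      linarith
    have h1d : (1:ℝ) ≤ ((n + 1 - k : ℕ) : ℝ) := le_trans (by linarith) hdR
    have hpow : ((n:ℝ)/2)^2 ≤ ((n + 1 - k : ℕ) : ℝ)^k := by
      calc ((n:ℝ)/2)^2 ≤ ((n + 1 - k : ℕ) : ℝ)^2 := by
            apply pow_le_pow_left₀ (by linarith) hdR
        _ ≤ ((n + 1 - k : ℕ) : ℝ)^k := pow_le_pow_right₀ h1d hk
    have hNge : ((n:ℝ))^2 / (4 * k.factorial) ≤ ((n.choose k : ℕ):ℝ) := by
      have hmid : ((n:ℝ)/2)^2 / (k.factorial : ℝ) ≤ ((n + 1 - k : ℕ) : ℝ)^k / k.factorial := by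
        gcongr
      calc ((n:ℝ))^2 / (4 * k.factorial) = ((n:ℝ)/2)^2 / (k.factorial : ℝ) := by ring
        _ ≤ ((n + 1 - k : ℕ) : ℝ)^k / k.factorial := hmid
        _ ≤ ((n.choose k : ℕ):ℝ) := hpc
    have hlin : (m:ℝ) + 1 ≤ ((n:ℝ))^2 / (4 * k.factorial) := by
      rw [hm, le_div_iff₀ (by positivity)]
      nlinarith [hc2, hnR, hkf, hc.le]
    have hfin : (m:ℝ) + 1 ≤ ((n.choose k : ℕ):ℝ) := hlin.trans hNge
    exact_mod_cast hfin
  have hmleN : m ≤ N := by omega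
  have hNR : (0:ℝ) < (N:ℝ) := by
    have : 0 < N := by omega
    exact_mod_cast this
  -- identity and p
  have hid : n * (n-1).choose (k-1) = N * k := by
    have h := Nat.add_one_mul_choose_eq (n-1) (k-1)
    have e1 : n - 1 + 1 = n := by omega
    have e2 : k - 1 + 1 = k := by omega
    simp only [Nat.succ_eq_add_one, e1, e2] at h
    rw [hNdef]
    exact h
  have hC1pos : (0:ℝ) < ((n-1).choose (k-1) : ℝ) := by
    exact_mod_cast Nat.choose_pos (by omega : k - 1 ≤ n - 1)
  set p := c * k / ((n - 1).choose (k - 1) : ℝ) with hpdef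
  have hpN : p = (m:ℝ)/(N:ℝ) := by
    have hidR : (n:ℝ) * ((n-1).choose (k-1) : ℝ) = (N:ℝ) * k := by exact_mod_cast hid
    rw [hpdef, hm]
    rw [div_eq_div_iff hC1pos.ne' hNR.ne']
    nlinarith [hidR]
  have hNmR : ((N - m : ℕ) : ℝ) = (N:ℝ) - m := Nat.cast_sub hmleN
  have h1p : 1 - p = ((N - m : ℕ) : ℝ) / (N:ℝ) := by
    rw [hpN, hNmR]
    field_simp
  have hp0 : 0 ≤ p := by rw [hpN]; positivity
  have hp1 : 0 ≤ 1 - p := by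
    rw [h1p]
    positivity
  -- set A
  set A := Finset.univ.filter (fun E : Finset (Finset (Fin n)) =>
      E.card = m ∧ (∀ e ∈ E, e.card = k) ∧ ¬ P E) with hAdef
  have hUnif : probUnif n m k (fun E => ¬ P E) = (A.card : ℝ) / ((N.choose m : ℕ) : ℝ) := by
    rw [probUnif, aux_count n m k, ← hNdef, hAdef]
    congr!
  -- probBinom lower bound
  have hBinNN : 0 ≤ probBinom n k p (fun E => ¬ P E) := by
    rw [probBinom]
    apply Finset.sum_nonneg
    intro E _
    split_ifs
    all_goals first
    | exact mul_nonneg (pow_nonneg hp0 _) (pow_nonneg hp1 _)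
    | exact le_rfl
  have hBin : (A.card : ℝ) * (p ^ m * (1 - p) ^ (N - m)) ≤ probBinom n k p (fun E => ¬ P E) := by
    have hsub : A ⊆ Finset.univ.filter
        (fun E : Finset (Finset (Fin n)) => ∀ e ∈ E, e.card = k) := by
      intro E hE
      rw [hAdef, Finset.mem_filter] at hE
      rw [Finset.mem_filter]
      exact ⟨Finset.mem_univ E, hE.2.2.1⟩
    have hmain : (A.card : ℝ) * (p ^ m * (1 - p) ^ (N - m)) ≤
        ∑ E ∈ Finset.univ.filter
            (fun E : Finset (Finset (Fin n)) => ∀ e ∈ E, e.card = k),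
          (if ¬ P E then p ^ E.card * (1 - p) ^ (N - E.card) else 0) := by
      calc (A.card : ℝ) * (p ^ m * (1 - p) ^ (N - m))
          = ∑ _E ∈ A, (p ^ m * (1 - p) ^ (N - m)) := by
            rw [Finset.sum_const, nsmul_eq_mul]
        _ = ∑ E ∈ A, (if ¬ P E then p ^ E.card * (1 - p) ^ (N - E.card) else 0) := by
            apply Finset.sum_congr rfl
            intro E hE
            rw [hAdef, Finset.mem_filter] at hE
            rw [if_pos hE.2.2.2, hE.2.1]
        _ ≤ _ := by
            refine Finset.sum_le_sum_of_subset_of_nonneg hsub (fun E _ _ => ?_)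
            split_ifs
            all_goals first
            | exact mul_nonneg (pow_nonneg hp0 _) (pow_nonneg hp1 _)
            | exact le_rfl
    refine hmain.trans (le_of_eq ?_)
    rw [probBinom, ← hNdef]
    congr!
  -- core application
  have hcore := aux_core m (N - m) hm1 (by omega)
  have haddN : m + (N - m) = N := by omega
  rw [haddN, hNmR] at hcore
  have hsimp : (m:ℝ) + ((N:ℝ) - m) = (N:ℝ) := by ring
  rw [hsimp] at hcore
  have h1p' : 1 - p = ((N:ℝ) - m) / (N:ℝ) := by rw [h1p, hNmR]
  have hcore' : 1 ≤ Real.exp 1 ^ 2 * Real.sqrt m *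
      ((N.choose m : ℝ) * p ^ m * (1 - p) ^ (N - m)) := by
    rw [h1p', hpN]
    exact hcore
  have hChoosePos : (0:ℝ) < (N.choose m : ℝ) := by exact_mod_cast Nat.choose_pos hmleN
  rw [hUnif]
  have hstep1 : (A.card : ℝ) / (N.choose m : ℝ)
      ≤ (A.card : ℝ) * (Real.exp 1 ^ 2 * Real.sqrt m * (p ^ m * (1 - p) ^ (N - m))) := by
    rw [div_le_iff₀ hChoosePos]
    have h := mul_le_mul_of_nonneg_left hcore' (Nat.cast_nonneg A.card : (0:ℝ) ≤ A.card)
    rw [mul_one] at h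
    refine h.trans (le_of_eq (by ring))
  have hstep2 : (A.card : ℝ) * (Real.exp 1 ^ 2 * Real.sqrt m * (p ^ m * (1 - p) ^ (N - m)))
      ≤ Real.exp 1 ^ 2 * Real.sqrt m * probBinom n k p (fun E => ¬ P E) := by
    have h := mul_le_mul_of_nonneg_left hBin
      (by positivity : (0:ℝ) ≤ Real.exp 1 ^ 2 * Real.sqrt m)
    refine le_trans (le_of_eq (by ring)) h
  have hsqrt : Real.sqrt m = Real.sqrt c * Real.sqrt n := by
    rw [hm, Real.sqrt_mul hc.le]
  have hstep3 : Real.exp 1 ^ 2 * Real.sqrt m * probBinom n k p (fun E => ¬ P E)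
      ≤ Real.exp 1 ^ 2 * (Real.sqrt c + 1) * Real.sqrt n *
        probBinom n k p (fun E => ¬ P E) := by
    apply mul_le_mul_of_nonneg_right ?_ hBinNN
    rw [hsqrt]
    have hpos : (0:ℝ) ≤ Real.exp 1 ^ 2 * Real.sqrt n := by positivity
    nlinarith [hpos]
  exact hstep1.trans (hstep2.trans hstep3)
end

section
/- Let k ≥ 4 and f(x) = x(1−e^{−x})/(k(1−e^{−x}−x e^{−x})) for x > 0. Then f(k/2) = (1/2)·(e^{k/2}−1)/(e^{k/2}−1−k/2) ≤ (1/2)(1 + 4/k) ≤ 1; consequently, since f is increasing on (0,∞), the unique positive solution ξ* of f(ξ*) = 1 satisfies ξ* ≥ k/2. -/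
open Real

/-- `f(x) = x(1-e^{-x}) / (k(1-e^{-x}-x e^{-x}))`. -/
noncomputable def fFun (k : ℕ) (x : ℝ) : ℝ :=
  x * (1 - Real.exp (-x)) / (k * (1 - Real.exp (-x) - x * Real.exp (-x)))

/-- for `k ≥ 4`,
`f(k/2) = (1/2)·(e^{k/2}-1)/(e^{k/2}-1-k/2) ≤ (1/2)(1+4/k) ≤ 1`; consequently, since
`f` is increasing on `(0,∞)`, the unique positive solution `ξ*` of `f(ξ*) = 1`
satisfies `ξ* ≥ k/2`. -/
theorem statement_19 (k : ℕ) (hk : 4 ≤ k)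
    (hmono : StrictMonoOn (fFun k) (Set.Ioi (0 : ℝ)))
    (ξ : ℝ) (hξpos : 0 < ξ) (hfξ : fFun k ξ = 1) :
    fFun k ((k : ℝ) / 2) =
        (1 / 2) * (Real.exp ((k : ℝ) / 2) - 1) /
          (Real.exp ((k : ℝ) / 2) - 1 - (k : ℝ) / 2) ∧
    fFun k ((k : ℝ) / 2) ≤ (1 / 2) * (1 + 4 / (k : ℝ)) ∧
    (1 / 2) * (1 + 4 / (k : ℝ)) ≤ 1 ∧
    (k : ℝ) / 2 ≤ ξ := by
  have hk4 : (4 : ℝ) ≤ (k : ℝ) := by exact_mod_cast hk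
  set t : ℝ := (k : ℝ) / 2 with ht_def
  have ht2 : (2 : ℝ) ≤ t := by simp only [ht_def]; linarith
  have ht : (0 : ℝ) < t := by linarith
  have he : (0 : ℝ) < Real.exp t := Real.exp_pos t
  have hd : (0 : ℝ) < Real.exp t - 1 - t := by
    have := Real.add_one_lt_exp (ne_of_gt ht)
    linarith
  have hkt : (k : ℝ) = 2 * t := by simp [ht_def]; ring
  have hquad : 1 + t + t ^ 2 / 2 ≤ Real.exp t := Real.quadratic_le_exp_of_nonneg ht.le
  have hee : Real.exp (-t) = (Real.exp t)⁻¹ := Real.exp_neg t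
  have heq : fFun k t = (1 / 2) * (Real.exp t - 1) / (Real.exp t - 1 - t) := by
    unfold fFun
    rw [hee, hkt]
    rw [div_eq_div_iff]
    · field_simp
    · have : 1 - (Real.exp t)⁻¹ - t * (Real.exp t)⁻¹ = (Real.exp t - 1 - t) / Real.exp t := by
        field_simp
      rw [this]
      positivity
    · exact ne_of_gt hd
  refine ⟨heq, ?_, ?_, ?_⟩
  · rw [heq, hkt]
    rw [div_le_iff₀ hd]
    have h1 : (1 / 2 : ℝ) * (1 + 4 / (2 * t)) = (1 / 2) * (1 + 2 / t) := by
      rw [div_mul_eq_div_div_swap]; ring_nf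
    rw [h1]
    rw [show (1 / 2 : ℝ) * (1 + 2 / t) * (Real.exp t - 1 - t)
        = (t + 2) * (Real.exp t - 1 - t) / (2 * t) by field_simp]
    rw [le_div_iff₀ (by linarith : (0:ℝ) < 2 * t)]
    nlinarith
  · have : 4 / (k : ℝ) ≤ 1 := by
      rw [div_le_one (by linarith)]; linarith
    linarith
  · by_contra h
    push_neg at h
    have hlt := hmono (Set.mem_Ioi.mpr hξpos) (Set.mem_Ioi.mpr ht) h
    have hle : fFun k t ≤ 1 := by
      rw [heq]
      rw [div_le_one hd]
      nlinarith
    rw [hfξ] at hlt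
    linarith
end
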